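/- arXiv:1005.5659 — 10 statements merged into one kernel-verified Lean document; each statement's English description precedes it below -/
import Mathlib

section
/- Let A = {A_x}_{x∈Ω_A} and B = {B_y}_{y∈Ω_B} be two jointly measurable observables (POVMs) on a complex Hilbert space H, and suppose that for some fixed outcome y the effect B_y is an orthogonal projection. Then A_x B_y = B_y A_x for every x ∈ Ω_A. -/
open scoped BigOperators

section Helpers
open ContinuousLinearMap

variable {H : Type*} [NormedAddCommGroup H] [InnerProductSpace ℂ H] [CompleteSpace H]

local notation "⟪" x ", " y "⟫" => @inner ℂ _ _ x y

/-- For a positive operator, zero quadratic form at `w` implies `T w = 0`. -/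
lemma aux_pos_inner_zero {T : H →L[ℂ] H} (hT : T.IsPositive) (w : H)
    (h : ⟪T w, w⟫ = 0) : T w = 0 := by
  have hreal := (isPositive_iff_complex T).mp hT
  simp only [RCLike.re_to_complex] at hreal
  have hre : ∀ x : H, Complex.re ⟪T w, x⟫ = 0 := by
    intro x
    set a := Complex.re ⟪T w, x⟫ with ha
    set b := Complex.re ⟪T x, x⟫ with hb
    have hbnn : 0 ≤ b := (hreal x).2
    have hq : ∀ t : ℝ, 0 ≤ 2 * t * a + t ^ 2 * b := by
      intro t
      have h0 := hT.re_inner_nonneg_left (w + (t : ℂ) • x)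
      simp only [RCLike.re_to_complex] at h0
      have hsa := hT.isSelfAdjoint
      rw [isSelfAdjoint_iff_isSymmetric] at hsa
      have hsa' : ∀ u v : H, ⟪T u, v⟫ = ⟪u, T v⟫ := fun u v => hsa u v
      have hsymm : ⟪T x, w⟫ = starRingEnd ℂ ⟪T w, x⟫ := by
        rw [hsa' x w]
        exact (inner_conj_symm _ _).symm
      have hexp : Complex.re ⟪T (w + (t : ℂ) • x), w + (t : ℂ) • x⟫
          = 2 * t * a + t ^ 2 * b := by
        simp only [map_add, map_smul, inner_add_left, inner_add_right,
          inner_smul_left, inner_smul_right, h, hsymm, Complex.conj_ofReal]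
        simp [Complex.add_re, Complex.mul_re, Complex.ofReal_re, Complex.ofReal_im,
          ha, hb, Complex.conj_re, Complex.conj_im]
        have hxw : (⟪x, T w⟫).re = (⟪T w, x⟫).re := by
          have h' := congrArg Complex.re (inner_conj_symm (𝕜 := ℂ) x (T w))
          rw [Complex.conj_re] at h'
          exact h'.symm
        rw [hxw]; ring
      rw [hexp] at h0
      exact h0
    by_contra hane
    have hpos : 0 < a ^ 2 := by positivity
    have hb1 : (0:ℝ) < b + 1 := by linarith
    have h5 : 0 ≤ (2 * (-a / (b + 1)) * a + (-a / (b + 1)) ^ 2 * b) * (b + 1) ^ 2 :=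
      mul_nonneg (hq _) (sq_nonneg _)
    have h6 : (2 * (-a / (b + 1)) * a + (-a / (b + 1)) ^ 2 * b) * (b + 1) ^ 2
        = -(a ^ 2 * (b + 2)) := by
      field_simp
      ring
    rw [h6] at h5
    nlinarith
  have hall : ∀ x : H, ⟪T w, x⟫ = 0 := by
    intro x
    have h1 := hre x
    have h2 := hre (Complex.I • x)
    rw [inner_smul_right] at h2
    simp [Complex.mul_re] at h2
    apply Complex.ext
    · exact h1
    · simpa [h1] using h2
  have := hall (T w)
  rwa [inner_self_eq_zero] at this

/-- If `P` is a projection and `0 ≤ T ≤ P`, then `T P = T` and `P T = T`. -/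
lemma aux_le_proj {P T : H →L[ℂ] H} (hP : IsSelfAdjoint P) (hPP : P * P = P)
    (hT : T.IsPositive) (hle : (P - T).IsPositive) : T * P = T ∧ P * T = T := by
  have hTQ : ∀ z : H, T (z - P z) = 0 := by
    intro z
    apply aux_pos_inner_zero hT
    have h1 := hT.re_inner_nonneg_left (z - P z)
    have h2 := hle.re_inner_nonneg_left (z - P z)
    simp only [RCLike.re_to_complex] at h1 h2
    have hPPz : P (P z) = P z := by
      have := congrArg (fun S : H →L[ℂ] H => S z) hPP
      simpa using this
    have hPQ : P (z - P z) = 0 := by simp [map_sub, hPPz]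
    have h3 : ⟪(P - T) (z - P z), z - P z⟫ = - ⟪T (z - P z), z - P z⟫ := by
      simp [ContinuousLinearMap.sub_apply, hPQ, inner_sub_left]
      ring
    rw [h3] at h2
    simp only [Complex.neg_re, neg_nonneg] at h2
    have hre0 : Complex.re ⟪T (z - P z), z - P z⟫ = 0 := le_antisymm h2 h1
    have hreal := ((isPositive_iff_complex T).mp hT (z - P z)).1
    simp only [RCLike.re_to_complex] at hreal
    rw [← hreal, hre0]
    simp
  have hTP : T * P = T := by
    ext z
    have := hTQ z
    rw [map_sub, sub_eq_zero] at this
    simpa [ContinuousLinearMap.mul_apply] using this.symm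
  refine ⟨hTP, ?_⟩
  have := congrArg star hTP
  rwa [star_mul, hP.star_eq, hT.isSelfAdjoint.star_eq] at this

end Helpers


/-- If two observables `A` and `B` on a complex Hilbert space are jointly measurable
and some effect `B y` is an orthogonal projection, then every `A x` commutes with `B y`. -/
theorem jointly_measurable_projection_commutes
    {H : Type*} [NormedAddCommGroup H] [InnerProductSpace ℂ H] [CompleteSpace H]
    {ΩA ΩB : Type*} [Fintype ΩA] [Fintype ΩB]
    (A : ΩA → H →L[ℂ] H) (B : ΩB → H →L[ℂ] H)
    (hApos : ∀ x, (A x).IsPositive) (hAeff : ∀ x, ((1 : H →L[ℂ] H) - A x).IsPositive)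
    (hAsum : ∑ x, A x = 1)
    (hBpos : ∀ y, (B y).IsPositive) (hBeff : ∀ y, ((1 : H →L[ℂ] H) - B y).IsPositive)
    (hBsum : ∑ y, B y = 1)
    (hJM : ∃ G : ΩA × ΩB → H →L[ℂ] H,
      (∀ p, (G p).IsPositive) ∧
      (∀ x, ∑ y, G (x, y) = A x) ∧
      (∀ y, ∑ x, G (x, y) = B y))
    (y : ΩB) (hproj : B y * B y = B y) :
    ∀ x, A x * B y = B y * A x := by
  classical
  obtain ⟨G, hGpos, hGA, hGB⟩ := hJM
  have sumpos : ∀ (s : Finset (ΩA × ΩB)), (∑ p ∈ s, G p).IsPositive := fun s =>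
    Finset.sum_induction _ _ (fun a b ha hb => ha.add hb) ContinuousLinearMap.isPositive_zero (fun i _ => hGpos _)
  have sumposB : ∀ (s : Finset ΩB), (∑ z ∈ s, B z).IsPositive := fun s =>
    Finset.sum_induction _ _ (fun a b ha hb => ha.add hb) ContinuousLinearMap.isPositive_zero (fun i _ => hBpos _)
  -- B y' - G (x, y') is positive
  have hBGpos : ∀ (x : ΩA) (y' : ΩB), (B y' - G (x, y')).IsPositive := by
    intro x y'
    have hsub : B y' - G (x, y') = ∑ x' ∈ Finset.univ.erase x, G (x', y') := by
      rw [← hGB y', ← Finset.add_sum_erase _ _ (Finset.mem_univ x), add_sub_cancel_left]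
    rw [hsub]
    exact Finset.sum_induction _ _ (fun a b ha hb => ha.add hb) ContinuousLinearMap.isPositive_zero
      (fun i _ => hGpos _)
  -- (1 - B y) - G (x, y') positive for y' ≠ y
  have hQGpos : ∀ (x : ΩA) (y' : ΩB), y' ≠ y →
      ((1 - B y) - G (x, y')).IsPositive := by
    intro x y' hne
    have h1 : (1 : H →L[ℂ] H) - B y = ∑ z ∈ Finset.univ.erase y, B z := by
      rw [Finset.sum_erase_eq_sub (Finset.mem_univ y), hBsum]
    have h2 : (1 - B y) - G (x, y')
        = (B y' - G (x, y')) + ∑ z ∈ (Finset.univ.erase y).erase y', B z := by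
      rw [h1, ← Finset.add_sum_erase _ _
        (Finset.mem_erase.mpr ⟨hne, Finset.mem_univ y'⟩)]
      abel
    rw [h2]
    exact (hBGpos x y').add (sumposB _)
  intro x
  -- For y itself: G (x, y) * B y = G (x, y) = B y * G (x, y)
  obtain ⟨hGyP, hPGy⟩ := aux_le_proj (hBpos y).isSelfAdjoint hproj (hGpos (x, y)) (hBGpos x y)
  -- For y' ≠ y: G (x, y') * B y = 0 = B y * G (x, y')
  have hzero : ∀ y' : ΩB, y' ≠ y → G (x, y') * B y = 0 ∧ B y * G (x, y') = 0 := by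
    intro y' hne
    have hQQ : ((1 : H →L[ℂ] H) - B y) * (1 - B y) = 1 - B y := by
      rw [sub_mul, mul_sub, mul_sub, hproj, one_mul, mul_one]
      abel
    obtain ⟨hGQ, hQG⟩ := aux_le_proj (hBeff y).isSelfAdjoint hQQ (hGpos (x, y'))
      (hQGpos x y' hne)
    constructor
    · have : G (x, y') * B y = G (x, y') * (1 : H →L[ℂ] H) - G (x, y') * (1 - B y) := by
        rw [← mul_sub, sub_sub_cancel]
      rw [this, mul_one, hGQ, sub_self]
    · have : B y * G (x, y') = (1 : H →L[ℂ] H) * G (x, y') - (1 - B y) * G (x, y') := by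
        rw [← sub_mul, sub_sub_cancel]
      rw [this, one_mul, hQG, sub_self]
  have hAx : A x = ∑ y', G (x, y') := (hGA x).symm
  calc A x * B y = ∑ y', G (x, y') * B y := by rw [hAx, Finset.sum_mul]
    _ = G (x, y) * B y := Finset.sum_eq_single_of_mem y (Finset.mem_univ y)
        (fun b _ hb => (hzero b hb).1)
    _ = G (x, y) := hGyP
    _ = B y * G (x, y) := hPGy.symm
    _ = ∑ y', B y * G (x, y') := (Finset.sum_eq_single_of_mem y (Finset.mem_univ y)
        (fun b _ hb => (hzero b hb).2)).symm
    _ = B y * A x := by rw [hAx, Finset.mul_sum]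
end

section
/- Let A = {A_x}_{x∈Ω_A} and B = {B_y}_{y∈Ω_B} be observables on ℂ^d, and suppose that for some fixed y the effect B_y is proportional to an orthogonal projection, i.e. B_y = cP with c > 0 and P a projection. If there is an instrument I implementing A whose associated channel satisfies I_c*(B_y) = B_y, then A_x B_y = B_y A_x for every x ∈ Ω_A. -/
open Matrix
open scoped BigOperators ComplexOrder

/-- If a finite sum of matrices of the form `Mᴴ * M` vanishes, each `M` vanishes. -/
lemma sum_conjTranspose_mul_self_eq_zero' {ι : Type*} [Fintype ι] {d : ℕ}
    (M : ι → Matrix (Fin d) (Fin d) ℂ) (h : ∑ i, (M i)ᴴ * M i = 0) (i : ι) : M i = 0 := by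
  have key : ∀ j, ∑ i, ∑ k, Complex.normSq (M i k j) = 0 := by
    intro j
    have h0 := congrFun (congrFun h j) j
    simp only [Matrix.sum_apply, Matrix.mul_apply, Matrix.conjTranspose_apply,
      Matrix.zero_apply] at h0
    have h1 : ((∑ i, ∑ k, Complex.normSq (M i k j) : ℝ) : ℂ) = 0 := by
      push_cast
      rw [← h0]
      refine Finset.sum_congr rfl fun i _ => Finset.sum_congr rfl fun k _ => ?_
      rw [Complex.normSq_eq_conj_mul_self]
      rfl
    exact_mod_cast h1
  ext k j
  have h2 := (Finset.sum_eq_zero_iff_of_nonneg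
    (fun i _ => Finset.sum_nonneg fun k _ => Complex.normSq_nonneg _)).mp (key j) i
    (Finset.mem_univ i)
  have h3 := (Finset.sum_eq_zero_iff_of_nonneg
    (fun k _ => Complex.normSq_nonneg _)).mp h2 k (Finset.mem_univ k)
  simpa using Complex.normSq_eq_zero.mp h3

/-- If some effect `B y` of an observable `B` is proportional to an orthogonal projection
and an instrument implementing the observable `A` leaves `B y` fixed (in the Heisenberg
picture), then every `A x` commutes with `B y`. -/
theorem nondisturb_scalar_projection_commutes
    {d : ℕ} {ΩA ΩB : Type*} [Fintype ΩA] [Fintype ΩB] {κ : Type*} [Fintype κ]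
    (A : ΩA → Matrix (Fin d) (Fin d) ℂ) (B : ΩB → Matrix (Fin d) (Fin d) ℂ)
    (hA : ∀ x, (A x).PosSemidef) (hAsum : ∑ x, A x = 1)
    (hB : ∀ y', (B y').PosSemidef) (hBsum : ∑ y', B y' = 1)
    (y : ΩB) (c : ℝ) (hc : 0 < c) (P : Matrix (Fin d) (Fin d) ℂ)
    (hPherm : P.IsHermitian) (hPproj : P * P = P) (hBy : B y = (c : ℂ) • P)
    (K : ΩA → κ → Matrix (Fin d) (Fin d) ℂ)
    (hK : ∀ x, ∑ α, (K x α)ᴴ * K x α = A x)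
    (hfix : ∑ x, ∑ α, (K x α)ᴴ * B y * K x α = B y) :
    ∀ x, A x * B y = B y * A x := by
  have hc0 : (c : ℂ) ≠ 0 := by exact_mod_cast hc.ne'
  -- The channel fixes P itself
  have hPfix : ∑ x, ∑ α, (K x α)ᴴ * P * K x α = P := by
    rw [hBy] at hfix
    have h2 : (c : ℂ) • (∑ x, ∑ α, (K x α)ᴴ * P * K x α) = (c : ℂ) • P := by
      rw [Finset.smul_sum]
      rw [← hfix]
      refine Finset.sum_congr rfl fun x _ => ?_
      rw [Finset.smul_sum]
      refine Finset.sum_congr rfl fun α _ => ?_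
      rw [Matrix.mul_smul, Matrix.smul_mul]
    exact smul_right_injective _ hc0 h2
  have hKsum : ∑ x, ∑ α, (K x α)ᴴ * K x α = 1 := by simp_rw [hK]; exact hAsum
  have e1 : ((1 : Matrix (Fin d) (Fin d) ℂ) - P) * (1 - P) = 1 - P := by
    rw [Matrix.sub_mul, Matrix.one_mul, Matrix.mul_sub, Matrix.mul_one, hPproj]
    abel
  have hPh : Pᴴ = P := hPherm.eq
  have h1Ph : ((1 : Matrix (Fin d) (Fin d) ℂ) - P)ᴴ = 1 - P := by
    rw [Matrix.conjTranspose_sub, Matrix.conjTranspose_one, hPh]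
  -- key expansions
  have key1 : ∀ X : Matrix (Fin d) (Fin d) ℂ,
      ((1 - P) * X * P)ᴴ * ((1 - P) * X * P)
        = P * (Xᴴ * X) * P - P * (Xᴴ * P * X) * P := by
    intro X
    have hct : ((1 - P) * X * P)ᴴ = P * Xᴴ * (1 - P) := by
      rw [Matrix.conjTranspose_mul, Matrix.conjTranspose_mul, h1Ph, hPh, Matrix.mul_assoc]
    rw [hct]
    have h3 : P * Xᴴ * (1 - P) * ((1 - P) * X * P) = P * Xᴴ * ((1 - P) * (1 - P)) * (X * P) := by
      simp only [Matrix.mul_assoc]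
    rw [h3, e1]
    simp only [Matrix.mul_sub, Matrix.sub_mul, Matrix.one_mul, Matrix.mul_one, Matrix.mul_assoc]
  have key2 : ∀ X : Matrix (Fin d) (Fin d) ℂ,
      (P * X * (1 - P))ᴴ * (P * X * (1 - P))
        = (1 - P) * (Xᴴ * P * X) * (1 - P) := by
    intro X
    have hct : (P * X * (1 - P))ᴴ = (1 - P) * Xᴴ * P := by
      rw [Matrix.conjTranspose_mul, Matrix.conjTranspose_mul, h1Ph, hPh, Matrix.mul_assoc]
    rw [hct]
    have h3 : (1 - P) * Xᴴ * P * (P * X * (1 - P)) = (1 - P) * Xᴴ * (P * P) * (X * (1 - P)) := by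
      simp only [Matrix.mul_assoc]
    rw [h3, hPproj]
    simp only [Matrix.mul_assoc]
  -- first vanishing sum
  have hz1 : ∑ p : ΩA × κ, ((1 - P) * K p.1 p.2 * P)ᴴ * ((1 - P) * K p.1 p.2 * P) = 0 := by
    rw [Fintype.sum_prod_type]
    simp_rw [key1]
    simp only [Finset.sum_sub_distrib]
    conv_lhs =>
      rw [show (∑ x, ∑ α, P * ((K x α)ᴴ * K x α) * P)
            = P * (∑ x, ∑ α, (K x α)ᴴ * K x α) * P by
          simp only [Finset.mul_sum, Finset.sum_mul]]
      rw [show (∑ x, ∑ α, P * ((K x α)ᴴ * P * K x α) * P)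
            = P * (∑ x, ∑ α, (K x α)ᴴ * P * K x α) * P by
          simp only [Finset.mul_sum, Finset.sum_mul]]
    rw [hKsum, hPfix, Matrix.mul_one, hPproj, hPproj, sub_self]
  have hz2 : ∑ p : ΩA × κ, (P * K p.1 p.2 * (1 - P))ᴴ * (P * K p.1 p.2 * (1 - P)) = 0 := by
    rw [Fintype.sum_prod_type]
    simp_rw [key2]
    conv_lhs =>
      rw [show (∑ x, ∑ α, (1 - P) * ((K x α)ᴴ * P * K x α) * (1 - P))
            = (1 - P) * (∑ x, ∑ α, (K x α)ᴴ * P * K x α) * (1 - P) by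
          simp only [Finset.mul_sum, Finset.sum_mul]]
    rw [hPfix, Matrix.sub_mul, Matrix.one_mul, hPproj, sub_self, Matrix.zero_mul]
  have f1 : ∀ x α, (1 - P) * K x α * P = 0 := fun x α =>
    sum_conjTranspose_mul_self_eq_zero' _ hz1 (x, α)
  have f2 : ∀ x α, P * K x α * (1 - P) = 0 := fun x α =>
    sum_conjTranspose_mul_self_eq_zero' _ hz2 (x, α)
  -- each Kraus operator commutes with P
  have hcomm : ∀ x α, K x α * P = P * K x α := by
    intro x α
    have a1 : K x α * P = P * (K x α * P) := by
      have := f1 x α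
      rw [Matrix.sub_mul, Matrix.one_mul, Matrix.sub_mul, sub_eq_zero, Matrix.mul_assoc] at this
      exact this
    have a2 : P * K x α = P * (K x α * P) := by
      have := f2 x α
      rw [Matrix.mul_sub, Matrix.mul_one, sub_eq_zero, Matrix.mul_assoc] at this
      exact this
    rw [a1, a2]
  have hcommH : ∀ x α, (K x α)ᴴ * P = P * (K x α)ᴴ := by
    intro x α
    have := congrArg Matrix.conjTranspose (hcomm x α)
    rw [Matrix.conjTranspose_mul, Matrix.conjTranspose_mul, hPh] at this
    exact this.symm
  intro x
  have hAP : A x * P = P * A x := by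
    rw [← hK x, Finset.sum_mul, Finset.mul_sum]
    refine Finset.sum_congr rfl fun α _ => ?_
    rw [Matrix.mul_assoc, hcomm, ← Matrix.mul_assoc, hcommH, Matrix.mul_assoc]
  rw [hBy, Matrix.mul_smul, Matrix.smul_mul, hAP]
end

section
/- Let {K_j}_{j∈J} be a finite family of operators on ℂ^d with Σ_j K_j* K_j = 1, and let P be an orthogonal projection such that Σ_j K_j* P K_j = P. Then P K_j = K_j P for every j ∈ J. -/
open Matrix
open scoped BigOperators

lemma trace_ctm_self {d : ℕ} (A : Matrix (Fin d) (Fin d) ℂ) :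
    (Aᴴ * A).trace = ((∑ i, ∑ j, ‖A i j‖ ^ 2 : ℝ) : ℂ) := by
  simp only [Matrix.trace, Matrix.diag_apply, Matrix.mul_apply, Matrix.conjTranspose_apply]
  push_cast
  rw [Finset.sum_comm]
  congr 1; ext i; congr 1; ext j
  rw [mul_comm, Complex.star_def, Complex.mul_conj, Complex.normSq_eq_norm_sq]
  push_cast
  ring

lemma all_zero_of_sum_trace {d : ℕ} {J : Type*} [Fintype J]
    (A : J → Matrix (Fin d) (Fin d) ℂ)
    (h : ∑ j, ((A j)ᴴ * A j).trace = 0) : ∀ j, A j = 0 := by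
  have h' : ∑ j, (∑ i, ∑ k, ‖A j i k‖ ^ 2 : ℝ) = 0 := by
    have := h
    simp only [trace_ctm_self] at this
    exact_mod_cast (by push_cast at this ⊢; exact_mod_cast this)
  intro j
  have hnn : ∀ j ∈ Finset.univ, (0:ℝ) ≤ ∑ i, ∑ k, ‖A j i k‖ ^ 2 :=
    fun j _ => Finset.sum_nonneg fun i _ => Finset.sum_nonneg fun k _ => sq_nonneg _
  have hj := (Finset.sum_eq_zero_iff_of_nonneg hnn).mp h' j (Finset.mem_univ j)
  ext i k
  have hnn2 : ∀ i ∈ Finset.univ, (0:ℝ) ≤ ∑ k, ‖A j i k‖ ^ 2 :=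
    fun i _ => Finset.sum_nonneg fun k _ => sq_nonneg _
  have hi := (Finset.sum_eq_zero_iff_of_nonneg hnn2).mp hj i (Finset.mem_univ i)
  have hk := (Finset.sum_eq_zero_iff_of_nonneg
    (fun k _ => sq_nonneg ‖A j i k‖)).mp hi k (Finset.mem_univ k)
  have : ‖A j i k‖ = 0 := by nlinarith [norm_nonneg (A j i k)]
  simpa using norm_eq_zero.mp this

/-- If an orthogonal projection `P` is a fixed point of the unital completely positive map
`X ↦ ∑ j, (K j)ᴴ * X * K j`, then `P` commutes with every Kraus operator `K j`. -/
theorem projection_fixed_point_commutes_with_kraus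
    {d : ℕ} {J : Type*} [Fintype J]
    (K : J → Matrix (Fin d) (Fin d) ℂ)
    (hK : ∑ j, (K j)ᴴ * K j = 1)
    (P : Matrix (Fin d) (Fin d) ℂ)
    (hPherm : P.IsHermitian) (hPproj : P * P = P)
    (hfix : ∑ j, (K j)ᴴ * P * K j = P) :
    ∀ j, P * K j = K j * P := by
  set Q : Matrix (Fin d) (Fin d) ℂ := 1 - P with hQ
  have hPQ : P * Q = 0 := by simp [hQ, mul_sub, hPproj]
  have hQP : Q * P = 0 := by simp [hQ, sub_mul, hPproj]
  have hQQ : Q * Q = Q := by simp [hQ, mul_sub, sub_mul, hPproj]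
  have hQh : Qᴴ = Q := by simp [hQ, hPherm.eq]
  have hPh : Pᴴ = P := hPherm.eq
  have hKQ : ∑ j, (K j)ᴴ * Q * K j = Q := by
    have : ∀ j, (K j)ᴴ * Q * K j = (K j)ᴴ * K j - (K j)ᴴ * P * K j := by
      intro j; simp [hQ, mul_sub, sub_mul]
    simp only [this, Finset.sum_sub_distrib, hK, hfix]
    exact hQ.symm
  -- Q K P = 0
  have h1 : ∀ j, Q * K j * P = 0 := by
    apply all_zero_of_sum_trace
    have key : ∑ j, (Q * K j * P)ᴴ * (Q * K j * P) = P * Q * P := by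
      have : ∀ j, (Q * K j * P)ᴴ * (Q * K j * P) = P * ((K j)ᴴ * Q * K j) * P := by
        intro j
        rw [Matrix.conjTranspose_mul, Matrix.conjTranspose_mul, hQh, hPh,
          show P * ((K j)ᴴ * Q) * (Q * K j * P) = P * ((K j)ᴴ * (Q * Q) * K j) * P from by
            noncomm_ring, hQQ]
      rw [Finset.sum_congr rfl fun j _ => this j, ← Finset.sum_mul, ← Finset.mul_sum, hKQ]
    rw [← Matrix.trace_sum, key, hPQ, Matrix.zero_mul, Matrix.trace_zero]
  -- P K Q = 0
  have h2 : ∀ j, P * K j * Q = 0 := by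
    apply all_zero_of_sum_trace
    have key : ∑ j, (P * K j * Q)ᴴ * (P * K j * Q) = Q * P * Q := by
      have : ∀ j, (P * K j * Q)ᴴ * (P * K j * Q) = Q * ((K j)ᴴ * P * K j) * Q := by
        intro j
        rw [Matrix.conjTranspose_mul, Matrix.conjTranspose_mul, hQh, hPh,
          show Q * ((K j)ᴴ * P) * (P * K j * Q) = Q * ((K j)ᴴ * (P * P) * K j) * Q from by
            noncomm_ring, hPproj]
      rw [Finset.sum_congr rfl fun j _ => this j, ← Finset.sum_mul, ← Finset.mul_sum, hfix]
    rw [← Matrix.trace_sum, key, hQP, Matrix.zero_mul, Matrix.trace_zero]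
  intro j
  have hPpQ : P + Q = 1 := by simp [hQ]
  calc P * K j = P * K j * (P + Q) := by rw [hPpQ, Matrix.mul_one]
    _ = P * K j * P + P * K j * Q := by rw [Matrix.mul_add]
    _ = P * K j * P := by rw [h2 j, add_zero]
    _ = P * (K j * P) + Q * (K j * P) := by
        rw [Matrix.mul_assoc, ← Matrix.mul_assoc Q, h1 j, add_zero]
    _ = K j * P := by rw [← Matrix.add_mul, hPpQ, Matrix.one_mul]
end

section
/- Let A = {A_x}_{x∈Ω_A} be an observable on ℂ^d and let I be an instrument implementing A whose associated channel I_c admits a fixed point of full rank, i.e. a positive definite matrix ρ with I_c(ρ) = ρ. If I does not disturb an observable B = {B_y}_{y∈Ω_B}, then A_x B_y = B_y A_x for all x ∈ Ω_A and y ∈ Ω_B. -/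
open Matrix
open scoped BigOperators ComplexOrder

lemma trace_ct_nonneg {m n : Type*} [Fintype m] [Fintype n] (M : Matrix m n ℂ) :
    0 ≤ (Mᴴ * M).trace := by
  simp only [Matrix.trace, Matrix.diag, Matrix.mul_apply, Matrix.conjTranspose_apply]
  exact Finset.sum_nonneg fun j _ => Finset.sum_nonneg fun i _ => star_mul_self_nonneg _

lemma trace_ct_eq_zero {m n : Type*} [Fintype m] [Fintype n] {M : Matrix m n ℂ}
    (h : (Mᴴ * M).trace = 0) : M = 0 := by
  simp only [Matrix.trace, Matrix.diag, Matrix.mul_apply, Matrix.conjTranspose_apply] at h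
  ext i j
  have := (Finset.sum_eq_zero_iff_of_nonneg (fun j _ => Finset.sum_nonneg
    fun i _ => star_mul_self_nonneg (M i j))).mp h j (Finset.mem_univ j)
  have := (Finset.sum_eq_zero_iff_of_nonneg
    (fun i _ => star_mul_self_nonneg (M i j))).mp this i (Finset.mem_univ i)
  have : Complex.normSq (M i j) = 0 := by
    have := congrArg Complex.re this
    simpa [Complex.mul_re, Complex.normSq] using this
  simpa using Complex.normSq_eq_zero.mp this

/-- If an instrument implementing `A` has an associated channel with a full-rank
(positive definite) fixed point and it does not disturb `B`, then `A` and `B` commute. -/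
theorem nondisturb_full_rank_fixed_point_commutes
    {d : ℕ} {ΩA ΩB : Type*} [Fintype ΩA] [Fintype ΩB] {κ : Type*} [Fintype κ]
    (A : ΩA → Matrix (Fin d) (Fin d) ℂ) (B : ΩB → Matrix (Fin d) (Fin d) ℂ)
    (hA : ∀ x, (A x).PosSemidef) (hAsum : ∑ x, A x = 1)
    (hB : ∀ y, (B y).PosSemidef) (hBsum : ∑ y, B y = 1)
    (K : ΩA → κ → Matrix (Fin d) (Fin d) ℂ)
    (hK : ∀ x, ∑ α, (K x α)ᴴ * K x α = A x)
    (ρ : Matrix (Fin d) (Fin d) ℂ) (hρ : ρ.PosDef)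
    (hρfix : ∑ x, ∑ α, K x α * ρ * (K x α)ᴴ = ρ)
    (hnd : ∀ y, ∑ x, ∑ α, (K x α)ᴴ * B y * K x α = B y) :
    ∀ x y, A x * B y = B y * A x := by
  intro x₀ y
  set Bm := B y with hBm
  have hBH : Bmᴴ = Bm := (hB y).1
  -- square root of ρ
  open scoped MatrixOrder in
  set S := CFC.sqrt ρ with hSdef
  open scoped MatrixOrder in
  have hSH : Sᴴ = S := (CFC.sqrt_nonneg ρ).posSemidef.1
  open scoped MatrixOrder in
  have hSS : S * S = ρ := CFC.sqrt_mul_sqrt_self ρ hρ.posSemidef.nonneg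
  have hSdet : IsUnit S.det := by
    have hd : S.det * S.det = ρ.det := by rw [← Matrix.det_mul, hSS]
    have hρd : ρ.det ≠ 0 := ne_of_gt hρ.det_pos
    have : S.det ≠ 0 := fun h => hρd (by rw [← hd, h, zero_mul])
    exact isUnit_iff_ne_zero.mpr this
  -- commutator
  set C : ΩA → κ → Matrix (Fin d) (Fin d) ℂ := fun x α => K x α * Bm - Bm * K x α with hCdef
  have key : ∀ x α, K x α * Bm = Bm * K x α := by
    have expand : ∀ x α, (C x α)ᴴ * C x α =
        Bm * ((K x α)ᴴ * K x α) * Bm - Bm * ((K x α)ᴴ * Bm * K x α)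
        - ((K x α)ᴴ * Bm * K x α) * Bm + (K x α)ᴴ * (Bm * Bm) * K x α := by
      intro x α
      simp only [hCdef, conjTranspose_sub, conjTranspose_mul, hBH]
      noncomm_ring
    have hsum : ∑ x, ∑ α, (C x α)ᴴ * C x α
        = (∑ x, ∑ α, (K x α)ᴴ * (Bm * Bm) * K x α) - Bm * Bm := by
      have e0 : ∑ x, ∑ α, (K x α)ᴴ * K x α = (1 : Matrix (Fin d) (Fin d) ℂ) := by
        rw [← hAsum]; exact Finset.sum_congr rfl fun x _ => hK x
      have e1 : ∑ x, ∑ α, Bm * ((K x α)ᴴ * K x α) * Bm = Bm * Bm := by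
        simp_rw [← Finset.sum_mul, ← Finset.mul_sum, e0, mul_one]
      have e2 : ∑ x, ∑ α, Bm * ((K x α)ᴴ * Bm * K x α) = Bm * Bm := by
        simp_rw [← Finset.mul_sum]; rw [hnd y]
      have e3 : ∑ x, ∑ α, ((K x α)ᴴ * Bm * K x α) * Bm = Bm * Bm := by
        simp_rw [← Finset.sum_mul]; rw [hnd y]
      calc ∑ x, ∑ α, (C x α)ᴴ * C x α
          = ∑ x, ∑ α, (Bm * ((K x α)ᴴ * K x α) * Bm - Bm * ((K x α)ᴴ * Bm * K x α)
            - ((K x α)ᴴ * Bm * K x α) * Bm + (K x α)ᴴ * (Bm * Bm) * K x α) :=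
            Finset.sum_congr rfl fun x _ => Finset.sum_congr rfl fun α _ => expand x α
        _ = (∑ x, ∑ α, Bm * ((K x α)ᴴ * K x α) * Bm)
            - (∑ x, ∑ α, Bm * ((K x α)ᴴ * Bm * K x α))
            - (∑ x, ∑ α, ((K x α)ᴴ * Bm * K x α) * Bm)
            + ∑ x, ∑ α, (K x α)ᴴ * (Bm * Bm) * K x α := by
            simp [Finset.sum_add_distrib, Finset.sum_sub_distrib]
        _ = (∑ x, ∑ α, (K x α)ᴴ * (Bm * Bm) * K x α) - Bm * Bm := by
            rw [e1, e2, e3]; abel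
    -- trace argument
    have htr : (∑ x, ∑ α, ((C x α * S)ᴴ * (C x α * S)).trace) = 0 := by
      have hrw : ∀ (x : ΩA) (α : κ), (C x α * S)ᴴ * (C x α * S)
          = S * ((C x α)ᴴ * C x α) * S := by
        intro x α
        rw [conjTranspose_mul, hSH]
        noncomm_ring
      calc ∑ x, ∑ α, ((C x α * S)ᴴ * (C x α * S)).trace
          = ∑ x, ∑ α, (S * ((C x α)ᴴ * C x α) * S).trace := by
            exact Finset.sum_congr rfl fun x _ => Finset.sum_congr rfl fun α _ =>
              congrArg _ (hrw x α)
        _ = (S * (∑ x, ∑ α, (C x α)ᴴ * C x α) * S).trace := by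
            simp_rw [← Matrix.trace_sum, ← Finset.sum_mul, ← Finset.mul_sum]
        _ = 0 := by
            rw [hsum, mul_sub, sub_mul, Matrix.trace_sub]
            have hA2 : (S * (∑ x, ∑ α, (K x α)ᴴ * (Bm * Bm) * K x α) * S).trace
                = ((Bm * Bm) * ρ).trace := by
              rw [Matrix.trace_mul_comm, ← Matrix.mul_assoc, hSS]
              calc (ρ * (∑ x, ∑ α, (K x α)ᴴ * (Bm * Bm) * K x α)).trace
                  = ∑ x, ∑ α, (ρ * ((K x α)ᴴ * (Bm * Bm) * K x α)).trace := by
                    simp_rw [Finset.mul_sum, Matrix.trace_sum]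
                _ = ∑ x, ∑ α, ((Bm * Bm) * (K x α * ρ * (K x α)ᴴ)).trace := by
                    refine Finset.sum_congr rfl fun x _ => Finset.sum_congr rfl fun α _ => ?_
                    rw [show ρ * ((K x α)ᴴ * (Bm * Bm) * K x α)
                        = (ρ * (K x α)ᴴ * (Bm * Bm)) * K x α by noncomm_ring,
                      Matrix.trace_mul_comm,
                      show K x α * (ρ * (K x α)ᴴ * (Bm * Bm))
                        = (K x α * ρ * (K x α)ᴴ) * (Bm * Bm) by noncomm_ring,
                      Matrix.trace_mul_comm]
                _ = ((Bm * Bm) * ρ).trace := by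
                    simp_rw [← Matrix.trace_sum, ← Finset.mul_sum]
                    rw [hρfix]
            have hB2 : (S * (Bm * Bm) * S).trace = ((Bm * Bm) * ρ).trace := by
              rw [Matrix.trace_mul_comm, ← Matrix.mul_assoc, hSS, Matrix.trace_mul_comm]
            rw [hA2, hB2, sub_self]
    -- each term vanishes
    intro x α
    have hnn : ∀ x' : ΩA, ∀ α' : κ, (0:ℂ) ≤ ((C x' α' * S)ᴴ * (C x' α' * S)).trace :=
      fun x' α' => trace_ct_nonneg _
    have hz : ((C x α * S)ᴴ * (C x α * S)).trace = 0 := by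
      have houter := (Finset.sum_eq_zero_iff_of_nonneg (fun x' _ =>
        Finset.sum_nonneg fun α' _ => hnn x' α')).mp htr x (Finset.mem_univ x)
      exact (Finset.sum_eq_zero_iff_of_nonneg (fun α' _ => hnn x α')).mp houter α
        (Finset.mem_univ α)
    have hCS : C x α * S = 0 := trace_ct_eq_zero hz
    have hC0 : C x α = 0 := by
      have := congrArg (· * S⁻¹) hCS
      simpa [Matrix.mul_assoc, Matrix.mul_nonsing_inv S hSdet] using this
    have := sub_eq_zero.mp hC0
    exact this
  -- conclude commutation
  have hct : ∀ α, (K x₀ α)ᴴ * Bm = Bm * (K x₀ α)ᴴ := by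
    intro α
    have := congrArg conjTranspose (key x₀ α)
    simpa [conjTranspose_mul, hBH] using this.symm
  calc A x₀ * Bm = (∑ α, (K x₀ α)ᴴ * K x₀ α) * Bm := by rw [hK]
    _ = ∑ α, (K x₀ α)ᴴ * K x₀ α * Bm := by rw [Finset.sum_mul]
    _ = ∑ α, Bm * ((K x₀ α)ᴴ * K x₀ α) := by
        refine Finset.sum_congr rfl fun α _ => ?_
        rw [Matrix.mul_assoc, key x₀ α, ← Matrix.mul_assoc, hct α, Matrix.mul_assoc]
    _ = Bm * A x₀ := by rw [← Finset.mul_sum, hK]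
end

section
/- Let A = {A_x}_{x∈Ω_A} and B = {B_y}_{y∈Ω_B} be observables on ℂ^d, and suppose that the complex linear span of the effects {B_y : y ∈ Ω_B} has dimension at least (d−1)² + 1 (as a subspace of the d×d matrices). Then there exists an instrument implementing A that does not disturb B if and only if A_x B_y = B_y A_x for all x ∈ Ω_A and y ∈ Ω_B. -/
open Matrix
open scoped BigOperators ComplexOrder

namespace ND

variable {d : ℕ}

abbrev Mat (d : ℕ) := Matrix (Fin d) (Fin d) ℂ

/-! ### Basic trace facts -/

lemma trace_cts (M : Mat d) :
    trace (Mᴴ * M) = ((∑ j, ∑ i, Complex.normSq (M i j) : ℝ) : ℂ) := by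
  rw [trace]
  push_cast
  refine Finset.sum_congr rfl fun j _ => ?_
  simp only [diag_apply, mul_apply, conjTranspose_apply]
  refine Finset.sum_congr rfl fun i _ => ?_
  rw [Complex.normSq_eq_conj_mul_self]
  rfl

lemma eq_zero_of_trace_cts {M : Mat d} (h : trace (Mᴴ * M) = 0) : M = 0 := by
  rw [trace_cts] at h
  norm_cast at h
  have h2 := (Finset.sum_eq_zero_iff_of_nonneg (fun j _ => Finset.sum_nonneg
    (fun i _ => Complex.normSq_nonneg _))).mp h
  ext i j
  have h3 := (Finset.sum_eq_zero_iff_of_nonneg (fun i _ => Complex.normSq_nonneg _)).mp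
    (h2 j (Finset.mem_univ j)) i (Finset.mem_univ i)
  simpa using Complex.normSq_eq_zero.mp h3

lemma trace_cts_nonneg (M : Mat d) : 0 ≤ trace (Mᴴ * M) := by
  rw [trace_cts]
  exact Complex.zero_le_real.mpr (Finset.sum_nonneg fun j _ => Finset.sum_nonneg
    (fun i _ => Complex.normSq_nonneg _))

/-- If a sum of `M i * (M i)ᴴ` vanishes, then each `M i` vanishes. -/
lemma eq_zero_of_sum_self_mul_conjTranspose {ι : Type*} [Fintype ι] {M : ι → Mat d}
    (h : ∑ i, M i * (M i)ᴴ = 0) (i : ι) : M i = 0 := by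
  have htr : ∑ i, trace ((M i)ᴴ * M i) = 0 := by
    calc ∑ i, trace ((M i)ᴴ * M i) = ∑ i, trace (M i * (M i)ᴴ) :=
          Finset.sum_congr rfl fun i _ => trace_mul_comm _ _
      _ = trace (∑ i, M i * (M i)ᴴ) := (trace_sum _ _).symm
      _ = 0 := by rw [h, trace_zero]
  have hz : trace ((M i)ᴴ * M i) = 0 := by
    have h0 : ∀ j ∈ Finset.univ, (0:ℂ) ≤ trace ((M j)ᴴ * M j) := fun j _ => trace_cts_nonneg _
    have := (Finset.sum_eq_zero_iff_of_nonneg h0).mp htr i (Finset.mem_univ i)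
    exact this
  exact eq_zero_of_trace_cts hz

open scoped MatrixOrder in
noncomputable def _root_.Matrix.PosSemidef.sqrt {M : Mat d} (_hM : M.PosSemidef) : Mat d :=
  CFC.sqrt M

open scoped MatrixOrder in
lemma _root_.Matrix.PosSemidef.posSemidef_sqrt {M : Mat d} (hM : M.PosSemidef) :
    hM.sqrt.PosSemidef :=
  nonneg_iff_posSemidef.mp (CFC.sqrt_nonneg M)

open scoped MatrixOrder in
lemma _root_.Matrix.PosSemidef.sqrt_mul_self {M : Mat d} (hM : M.PosSemidef) :
    hM.sqrt * hM.sqrt = M :=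
  CFC.sqrt_mul_sqrt_self M hM.nonneg

open scoped MatrixOrder in
lemma posSemidef_iff_eq_transpose_mul_self {M : Mat d} : M.PosSemidef ↔ ∃ B : Mat d, M = Bᴴ * B :=
  ⟨fun h => CStarAlgebra.nonneg_iff_eq_star_mul_self.mp h.nonneg,
    fun ⟨B, hB⟩ => hB ▸ posSemidef_conjTranspose_mul_self B⟩

lemma psd_trace_eq_zero {M : Mat d} (hM : M.PosSemidef) (h : trace M = 0) : M = 0 := by
  obtain ⟨B, rfl⟩ := posSemidef_iff_eq_transpose_mul_self.mp hM
  rw [eq_zero_of_trace_cts h]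
  simp

lemma psd_trace_nonneg {M : Mat d} (hM : M.PosSemidef) : 0 ≤ trace M := by
  obtain ⟨B, rfl⟩ := posSemidef_iff_eq_transpose_mul_self.mp hM
  exact trace_cts_nonneg B

lemma psd_smul_real {M : Mat d} (hM : M.PosSemidef) {r : ℝ} (hr : 0 ≤ r) :
    ((r : ℂ) • M).PosSemidef := by
  refine .of_dotProduct_mulVec_nonneg ?_ ?_
  · unfold Matrix.IsHermitian
    rw [conjTranspose_smul, hM.1]
    congr 1
    simp
  · intro x
    rw [smul_mulVec, dotProduct_smul, smul_eq_mul]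
    exact mul_nonneg (Complex.zero_le_real.mpr hr) (hM.dotProduct_mulVec_nonneg x)

lemma psd_sum {ι : Type*} [Fintype ι] {M : ι → Mat d} (h : ∀ i, (M i).PosSemidef) :
    (∑ i, M i).PosSemidef := by
  classical
  refine Finset.sum_induction M Matrix.PosSemidef (fun a b ha hb => ha.add hb)
    Matrix.PosSemidef.zero (fun i _ => h i)









/-! ### Spectral functional calculus -/

section mfun

variable {A : Mat d} (hA : A.IsHermitian)

/-- Apply a real function to a Hermitian matrix through its spectral decomposition. -/
noncomputable def mfun (f : ℝ → ℝ) : Mat d :=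
  (hA.eigenvectorUnitary : Mat d) * diagonal (fun i => (f (hA.eigenvalues i) : ℂ)) *
    (hA.eigenvectorUnitary : Mat d)ᴴ

lemma star_U_mul_U : (hA.eigenvectorUnitary : Mat d)ᴴ * (hA.eigenvectorUnitary : Mat d) = 1 := by
  rw [← star_eq_conjTranspose]
  exact Unitary.coe_star_mul_self _

lemma U_mul_star_U : (hA.eigenvectorUnitary : Mat d) * (hA.eigenvectorUnitary : Mat d)ᴴ = 1 := by
  rw [← star_eq_conjTranspose]
  exact Unitary.coe_mul_star_self _

lemma mfun_congr {f g : ℝ → ℝ} (h : ∀ i, f (hA.eigenvalues i) = g (hA.eigenvalues i)) :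
    mfun hA f = mfun hA g := by
  unfold mfun
  have hfg : (fun i => (f (hA.eigenvalues i) : ℂ)) = (fun i => (g (hA.eigenvalues i) : ℂ)) :=
    funext fun i => by rw [h i]
  rw [hfg]
lemma mfun_id : mfun hA (fun x => x) = A := by
  conv_rhs => rw [hA.spectral_theorem]
  rw [Unitary.conjStarAlgAut_apply, star_eq_conjTranspose]
  rfl

lemma mfun_conjTranspose (f : ℝ → ℝ) : (mfun hA f)ᴴ = mfun hA f := by
  unfold mfun
  rw [conjTranspose_mul, conjTranspose_mul, conjTranspose_conjTranspose, diagonal_conjTranspose]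
  have hst : (star fun i => (f (hA.eigenvalues i):ℂ)) = fun i => (f (hA.eigenvalues i):ℂ) :=
    funext fun i => by simp [Pi.star_apply, Complex.star_def, Complex.conj_ofReal]
  rw [hst, Matrix.mul_assoc]
lemma mfun_isHermitian (f : ℝ → ℝ) : (mfun hA f).IsHermitian := mfun_conjTranspose hA f

lemma mfun_mul_mfun (f g : ℝ → ℝ) :
    mfun hA f * mfun hA g = mfun hA (fun x => f x * g x) := by
  unfold mfun
  set U : Mat d := (hA.eigenvectorUnitary : Mat d)
  have h1 : Uᴴ * (U * (diagonal (fun i => (g (hA.eigenvalues i) : ℂ)) * Uᴴ)) =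
      diagonal (fun i => (g (hA.eigenvalues i) : ℂ)) * Uᴴ := by
    rw [← Matrix.mul_assoc, ← Matrix.mul_assoc, star_U_mul_U, Matrix.one_mul]
  simp only [Matrix.mul_assoc, h1]
  rw [← Matrix.mul_assoc (diagonal _) (diagonal _), diagonal_mul_diagonal]
  push_cast
  rfl

lemma mfun_one : mfun hA (fun _ => 1) = 1 := by
  unfold mfun
  have : diagonal (fun i : Fin d => ((1:ℝ) : ℂ)) = 1 := by
    simp [Matrix.diagonal_one]
  rw [this, Matrix.mul_one, U_mul_star_U]

lemma mfun_add (f g : ℝ → ℝ) :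
    mfun hA (fun x => f x + g x) = mfun hA f + mfun hA g := by
  unfold mfun
  have hd : (diagonal (fun i => ((f (hA.eigenvalues i) + g (hA.eigenvalues i) : ℝ) : ℂ)) : Mat d) =
      diagonal (fun i => (f (hA.eigenvalues i) : ℂ)) +
        diagonal (fun i => (g (hA.eigenvalues i) : ℂ)) := by
    have hfun : (fun i => ((f (hA.eigenvalues i) + g (hA.eigenvalues i) : ℝ) : ℂ)) =
        fun i => ((f (hA.eigenvalues i) : ℂ) + (g (hA.eigenvalues i) : ℂ)) :=
      funext fun i => by push_cast; rfl
    rw [hfun, Matrix.diagonal_add]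
  rw [hd, Matrix.mul_add, Matrix.add_mul]
lemma mfun_sub (f g : ℝ → ℝ) :
    mfun hA (fun x => f x - g x) = mfun hA f - mfun hA g := by
  unfold mfun
  have hd : (diagonal (fun i => ((f (hA.eigenvalues i) - g (hA.eigenvalues i) : ℝ) : ℂ)) : Mat d) =
      diagonal (fun i => (f (hA.eigenvalues i) : ℂ)) -
        diagonal (fun i => (g (hA.eigenvalues i) : ℂ)) := by
    have hfun : (fun i => ((f (hA.eigenvalues i) - g (hA.eigenvalues i) : ℝ) : ℂ)) =
        fun i => ((f (hA.eigenvalues i) : ℂ) - (g (hA.eigenvalues i) : ℂ)) :=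
      funext fun i => by push_cast; rfl
    rw [hfun, Matrix.diagonal_sub]
  rw [hd, Matrix.mul_sub, Matrix.sub_mul]
lemma mfun_const (c : ℝ) : mfun hA (fun _ => c) = (c : ℂ) • 1 := by
  unfold mfun
  have hd : (diagonal (fun _ : Fin d => ((c:ℝ) : ℂ)) : Mat d) = (c : ℂ) • 1 := by
    have h1 : (fun _ : Fin d => ((c:ℝ) : ℂ)) = (c:ℂ) • (fun _ : Fin d => (1:ℂ)) :=
      funext fun i => by simp
    rw [h1, Matrix.diagonal_smul, Matrix.diagonal_one]
  rw [hd, mul_smul_comm, smul_mul_assoc, Matrix.mul_one, U_mul_star_U]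
lemma mfun_psd {f : ℝ → ℝ} (h : ∀ i, 0 ≤ f (hA.eigenvalues i)) :
    (mfun hA f).PosSemidef := by
  unfold mfun
  exact (Matrix.PosSemidef.diagonal (fun i => Complex.zero_le_real.mpr (h i))
    ).mul_mul_conjTranspose_same _

lemma sandwich (X : Mat d) :
    (hA.eigenvectorUnitary : Mat d)ᴴ * ((hA.eigenvectorUnitary : Mat d) * X *
      (hA.eigenvectorUnitary : Mat d)ᴴ) * (hA.eigenvectorUnitary : Mat d) = X := by
  simp only [← Matrix.mul_assoc]
  rw [star_U_mul_U, Matrix.one_mul, Matrix.mul_assoc, star_U_mul_U, Matrix.mul_one]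

lemma mfun_eq_zero_iff {f : ℝ → ℝ} :
    mfun hA f = 0 ↔ ∀ i, f (hA.eigenvalues i) = 0 := by
  constructor
  · intro h
    intro i
    have h2 := sandwich hA (diagonal (fun i => (f (hA.eigenvalues i) : ℂ)))
    rw [show (hA.eigenvectorUnitary : Mat d) * diagonal (fun i => (f (hA.eigenvalues i) : ℂ)) *
      (hA.eigenvectorUnitary : Mat d)ᴴ = mfun hA f from rfl, h, Matrix.mul_zero,
      Matrix.zero_mul] at h2
    have h4 := congrFun (congrFun h2 i) i
    simp only [Matrix.zero_apply, Matrix.diagonal_apply_eq] at h4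
    exact_mod_cast h4.symm
  · intro h
    unfold mfun
    have hD : diagonal (fun i => (f (hA.eigenvalues i) : ℂ)) = 0 := by
      have hfun : (fun i => (f (hA.eigenvalues i) : ℂ)) = fun _ => (0:ℂ) :=
        funext fun i => by rw [h i]; norm_num
      rw [hfun, Matrix.diagonal_zero]
    rw [hD, Matrix.mul_zero, Matrix.zero_mul]


lemma mulUUH (Y : Mat d) :
    Y * (hA.eigenvectorUnitary : Mat d) * (hA.eigenvectorUnitary : Mat d)ᴴ = Y := by
  rw [Matrix.mul_assoc, U_mul_star_U, Matrix.mul_one]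

lemma mulUHU (Y : Mat d) :
    Y * (hA.eigenvectorUnitary : Mat d)ᴴ * (hA.eigenvectorUnitary : Mat d) = Y := by
  rw [Matrix.mul_assoc, star_U_mul_U, Matrix.mul_one]

lemma conj_diag_eigenvalues :
    (hA.eigenvectorUnitary : Mat d)ᴴ * A * (hA.eigenvectorUnitary : Mat d) =
      diagonal (fun i => (hA.eigenvalues i : ℂ)) := by
  have h1 : (hA.eigenvectorUnitary : Mat d)ᴴ * (mfun hA (fun x => x)) *
      (hA.eigenvectorUnitary : Mat d) = diagonal (fun i => (hA.eigenvalues i : ℂ)) := by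
    unfold mfun
    exact sandwich hA _
  rw [mfun_id hA] at h1
  exact h1

lemma mfun_comm {X : Mat d} (f : ℝ → ℝ) (hX : X * A = A * X) :
    X * mfun hA f = mfun hA f * X := by
  have hMD : ((hA.eigenvectorUnitary : Mat d)ᴴ * X * (hA.eigenvectorUnitary : Mat d)) *
      diagonal (fun i => (hA.eigenvalues i : ℂ)) =
      diagonal (fun i => (hA.eigenvalues i : ℂ)) *
      ((hA.eigenvectorUnitary : Mat d)ᴴ * X * (hA.eigenvectorUnitary : Mat d)) := by
    rw [← conj_diag_eigenvalues hA]
    calc (hA.eigenvectorUnitary : Mat d)ᴴ * X * (hA.eigenvectorUnitary : Mat d) *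
        ((hA.eigenvectorUnitary : Mat d)ᴴ * A * (hA.eigenvectorUnitary : Mat d))
        = (hA.eigenvectorUnitary : Mat d)ᴴ * (X * A) * (hA.eigenvectorUnitary : Mat d) := by
          simp only [← Matrix.mul_assoc]
          rw [mulUUH hA]
      _ = (hA.eigenvectorUnitary : Mat d)ᴴ * (A * X) * (hA.eigenvectorUnitary : Mat d) := by
          rw [hX]
      _ = (hA.eigenvectorUnitary : Mat d)ᴴ * A * (hA.eigenvectorUnitary : Mat d) *
          ((hA.eigenvectorUnitary : Mat d)ᴴ * X * (hA.eigenvectorUnitary : Mat d)) := by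
          simp only [← Matrix.mul_assoc]
          rw [mulUUH hA]
  have hMDf : ((hA.eigenvectorUnitary : Mat d)ᴴ * X * (hA.eigenvectorUnitary : Mat d)) *
      diagonal (fun i => (f (hA.eigenvalues i) : ℂ)) =
      diagonal (fun i => (f (hA.eigenvalues i) : ℂ)) *
      ((hA.eigenvectorUnitary : Mat d)ᴴ * X * (hA.eigenvectorUnitary : Mat d)) := by
    ext i j
    rw [Matrix.mul_diagonal, Matrix.diagonal_mul]
    have hentry : ((hA.eigenvectorUnitary : Mat d)ᴴ * X * (hA.eigenvectorUnitary : Mat d)) i j *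
        (hA.eigenvalues j : ℂ) = (hA.eigenvalues i : ℂ) *
        ((hA.eigenvectorUnitary : Mat d)ᴴ * X * (hA.eigenvectorUnitary : Mat d)) i j := by
      have h5 := congrFun (congrFun hMD i) j
      simpa [Matrix.mul_diagonal, Matrix.diagonal_mul] using h5
    by_cases hij : hA.eigenvalues i = hA.eigenvalues j
    · rw [hij, mul_comm]
    · have hM0 : ((hA.eigenvectorUnitary : Mat d)ᴴ * X * (hA.eigenvectorUnitary : Mat d)) i j = 0 := by
        have h2 : ((hA.eigenvectorUnitary : Mat d)ᴴ * X * (hA.eigenvectorUnitary : Mat d)) i j *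
            ((hA.eigenvalues j : ℂ) - (hA.eigenvalues i : ℂ)) = 0 := by
          linear_combination hentry
        rcases mul_eq_zero.mp h2 with h3 | h3
        · exact h3
        · exfalso
          apply hij
          have h4 := sub_eq_zero.mp h3
          exact_mod_cast h4.symm
      rw [hM0, zero_mul, mul_zero]
  unfold mfun
  calc X * ((hA.eigenvectorUnitary : Mat d) * diagonal (fun i => (f (hA.eigenvalues i) : ℂ)) *
      (hA.eigenvectorUnitary : Mat d)ᴴ)
      = (hA.eigenvectorUnitary : Mat d) *
        (((hA.eigenvectorUnitary : Mat d)ᴴ * X * (hA.eigenvectorUnitary : Mat d)) *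
          diagonal (fun i => (f (hA.eigenvalues i) : ℂ))) * (hA.eigenvectorUnitary : Mat d)ᴴ := by
        simp only [← Matrix.mul_assoc]
        rw [U_mul_star_U, Matrix.one_mul]
    _ = (hA.eigenvectorUnitary : Mat d) *
        (diagonal (fun i => (f (hA.eigenvalues i) : ℂ)) *
          ((hA.eigenvectorUnitary : Mat d)ᴴ * X * (hA.eigenvectorUnitary : Mat d))) *
        (hA.eigenvectorUnitary : Mat d)ᴴ := by rw [hMDf]
    _ = (hA.eigenvectorUnitary : Mat d) * diagonal (fun i => (f (hA.eigenvalues i) : ℂ)) *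
        (hA.eigenvectorUnitary : Mat d)ᴴ * X := by
        simp only [← Matrix.mul_assoc]
        rw [mulUUH hA]

lemma mfun_ann_left {X : Mat d} {g : ℝ → ℝ} (h : mfun hA g * X = 0) (f : ℝ → ℝ)
    (hfg : ∀ i, g (hA.eigenvalues i) = 0 → f (hA.eigenvalues i) = 0) :
    mfun hA f * X = 0 := by
  have h1 : diagonal (fun i => (g (hA.eigenvalues i) : ℂ)) *
      ((hA.eigenvectorUnitary : Mat d)ᴴ * X) = 0 := by
    calc diagonal (fun i => (g (hA.eigenvalues i) : ℂ)) * ((hA.eigenvectorUnitary : Mat d)ᴴ * X)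
        = (hA.eigenvectorUnitary : Mat d)ᴴ * (mfun hA g * X) := by
          unfold mfun
          simp only [← Matrix.mul_assoc]
          rw [star_U_mul_U, Matrix.one_mul]
      _ = 0 := by rw [h, Matrix.mul_zero]
  have h3 : diagonal (fun i => (f (hA.eigenvalues i) : ℂ)) *
      ((hA.eigenvectorUnitary : Mat d)ᴴ * X) = 0 := by
    ext i j
    rw [Matrix.diagonal_mul]
    by_cases hgi : g (hA.eigenvalues i) = 0
    · rw [hfg i hgi]
      simp
    · have h4 := congrFun (congrFun h1 i) j
      rw [Matrix.diagonal_mul] at h4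
      simp only [Matrix.zero_apply] at h4 ⊢
      rcases mul_eq_zero.mp h4 with h5 | h5
      · exfalso; exact hgi (by exact_mod_cast h5)
      · rw [h5, mul_zero]
  calc mfun hA f * X
      = (hA.eigenvectorUnitary : Mat d) * (diagonal (fun i => (f (hA.eigenvalues i) : ℂ)) *
        ((hA.eigenvectorUnitary : Mat d)ᴴ * X)) := by
        unfold mfun
        simp only [← Matrix.mul_assoc]
    _ = 0 := by rw [h3, Matrix.mul_zero]

lemma mfun_ann_right {X : Mat d} {g : ℝ → ℝ} (h : X * mfun hA g = 0) (f : ℝ → ℝ)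
    (hfg : ∀ i, g (hA.eigenvalues i) = 0 → f (hA.eigenvalues i) = 0) :
    X * mfun hA f = 0 := by
  have h1 : (X * (hA.eigenvectorUnitary : Mat d)) *
      diagonal (fun i => (g (hA.eigenvalues i) : ℂ)) = 0 := by
    calc (X * (hA.eigenvectorUnitary : Mat d)) * diagonal (fun i => (g (hA.eigenvalues i) : ℂ))
        = (X * mfun hA g) * (hA.eigenvectorUnitary : Mat d) := by
          unfold mfun
          simp only [← Matrix.mul_assoc]
          rw [mulUHU hA]
      _ = 0 := by rw [h, Matrix.zero_mul]
  have h3 : (X * (hA.eigenvectorUnitary : Mat d)) *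
      diagonal (fun i => (f (hA.eigenvalues i) : ℂ)) = 0 := by
    ext i j
    rw [Matrix.mul_diagonal]
    by_cases hgj : g (hA.eigenvalues j) = 0
    · rw [hfg j hgj]
      simp
    · have h4 := congrFun (congrFun h1 i) j
      rw [Matrix.mul_diagonal] at h4
      simp only [Matrix.zero_apply] at h4 ⊢
      rcases mul_eq_zero.mp h4 with h5 | h5
      · rw [h5, zero_mul]
      · exfalso; exact hgj (by exact_mod_cast h5)
  calc X * mfun hA f
      = (X * (hA.eigenvectorUnitary : Mat d)) * diagonal (fun i => (f (hA.eigenvalues i) : ℂ)) *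
        (hA.eigenvectorUnitary : Mat d)ᴴ := by
        unfold mfun
        simp only [← Matrix.mul_assoc]
    _ = 0 := by rw [h3, Matrix.zero_mul]

end mfun

/-! ### Corner lemma -/

lemma psd_corner {M P : Mat d} (hM : M.PosSemidef) (hP : Pᴴ = P)
    (h : (1 - P) * M * (1 - P) = 0) : M = P * M * P := by
  have hQ : ((1 : Mat d) - P)ᴴ = 1 - P := by rw [conjTranspose_sub, conjTranspose_one, hP]
  have hS := hM.posSemidef_sqrt
  have hSherm : (hM.sqrt)ᴴ = hM.sqrt := hS.isHermitian
  have h1 : (hM.sqrt * (1 - P))ᴴ * (hM.sqrt * (1 - P)) = 0 := by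
    rw [conjTranspose_mul, hQ, hSherm]
    calc (1 - P) * hM.sqrt * (hM.sqrt * (1 - P))
        = (1 - P) * (hM.sqrt * hM.sqrt) * (1 - P) := by simp only [Matrix.mul_assoc]
      _ = (1 - P) * M * (1 - P) := by rw [hM.sqrt_mul_self]
      _ = 0 := h
  have h2 : hM.sqrt * (1 - P) = 0 := conjTranspose_mul_self_eq_zero.mp h1
  have h3 : M * (1 - P) = 0 := by
    calc M * (1 - P) = hM.sqrt * (hM.sqrt * (1 - P)) := by
          rw [← Matrix.mul_assoc, hM.sqrt_mul_self]
      _ = 0 := by rw [h2, Matrix.mul_zero]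
  have h4 : (1 - P) * M = 0 := by
    have h9 := congrArg conjTranspose h3
    rwa [conjTranspose_mul, hQ, hM.isHermitian.eq, conjTranspose_zero] at h9
  have h5 : M = M * P := by
    have h6 : M * 1 - M * P = 0 := by rw [← Matrix.mul_sub]; exact h3
    rw [Matrix.mul_one] at h6
    exact (sub_eq_zero.mp h6)
  have h7 : M = P * M := by
    have h8 : 1 * M - P * M = 0 := by rw [← Matrix.sub_mul]; exact h4
    rw [Matrix.one_mul] at h8
    exact (sub_eq_zero.mp h8)
  calc M = P * M := h7
    _ = P * (M * P) := by rw [← h5]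
    _ = P * M * P := by rw [Matrix.mul_assoc]

/-! ### The channel as a linear map, and corners -/

noncomputable def kmap {ι : Type*} [Fintype ι] (k : ι → Mat d) : Mat d →ₗ[ℂ] Mat d where
  toFun X := ∑ i, k i * X * (k i)ᴴ
  map_add' X Y := by
    rw [← Finset.sum_add_distrib]
    refine Finset.sum_congr rfl fun i _ => ?_
    rw [Matrix.mul_add, Matrix.add_mul]
  map_smul' c X := by
    rw [RingHom.id_apply, Finset.smul_sum]
    refine Finset.sum_congr rfl fun i _ => ?_
    rw [mul_smul_comm, smul_mul_assoc]

@[simp] lemma kmap_apply {ι : Type*} [Fintype ι] (k : ι → Mat d) (X : Mat d) :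
    kmap k X = ∑ i, k i * X * (k i)ᴴ := rfl

noncomputable def corner (R : Mat d) : Submodule ℂ (Mat d) where
  carrier := {X | R * X * R = X}
  add_mem' := by
    intro a b ha hb
    simp only [Set.mem_setOf_eq] at *
    rw [Matrix.mul_add, Matrix.add_mul, ha, hb]
  zero_mem' := by simp only [Set.mem_setOf_eq, Matrix.mul_zero, Matrix.zero_mul]
  smul_mem' := by
    intro c x hx
    simp only [Set.mem_setOf_eq, SetLike.mem_coe] at *
    rw [mul_smul_comm, smul_mul_assoc, hx]

lemma mem_corner {R X : Mat d} : X ∈ corner R ↔ R * X * R = X := Iff.rfl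


lemma psd_fixed_upgrade {Y H Hp Pp : Mat d} (hYpsd : Y.PosSemidef)
    (hYHpsd : (Y - H).PosSemidef) (hPpherm : Ppᴴ = Pp) (hPp2 : Pp * Pp = Pp)
    (hPHP : Pp * H * Pp = Hp) (htrY : trace Y = trace Hp) : Y = Hp := by
  have hX1psd : (Pp * (Y - H) * Pp).PosSemidef := by
    have h13 := hYHpsd.mul_mul_conjTranspose_same Pp
    rwa [hPpherm] at h13
  have hX1eq : Pp * (Y - H) * Pp = Pp * Y * Pp - Hp := by
    rw [Matrix.mul_sub, Matrix.sub_mul, hPHP]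
  have htr1 : trace (Pp * Y * Pp) = trace (Y * Pp) := by
    rw [trace_mul_cycle, hPp2, trace_mul_comm]
  have h12' : ((1:Mat d) - Pp) * (1 - Pp) = 1 - Pp := by
    rw [Matrix.mul_sub, Matrix.mul_one, Matrix.sub_mul, Matrix.one_mul, hPp2, sub_self, sub_zero]
  have hq : ((1:Mat d) - Pp)ᴴ = 1 - Pp := by rw [conjTranspose_sub, conjTranspose_one, hPpherm]
  have hZpsd : (((1:Mat d) - Pp) * Y * (1 - Pp)).PosSemidef := by
    have h14 := hYpsd.mul_mul_conjTranspose_same (1 - Pp)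
    rwa [hq] at h14
  have htr2 : trace (((1:Mat d) - Pp) * Y * (1 - Pp)) = trace Y - trace (Y * Pp) := by
    rw [trace_mul_cycle, h12', Matrix.sub_mul, Matrix.one_mul, trace_sub,
      trace_mul_comm]
  have hle : trace (Y * Pp) ≤ trace Y := by
    have h0 := psd_trace_nonneg hZpsd
    rw [htr2] at h0
    exact sub_nonneg.mp h0
  have hX1zero : Pp * (Y - H) * Pp = 0 := by
    apply psd_trace_eq_zero hX1psd
    have hge := psd_trace_nonneg hX1psd
    rw [hX1eq, trace_sub, htr1] at hge ⊢
    have h15 : trace (Y * Pp) - trace Hp ≤ 0 := by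
      rw [← htrY]
      exact sub_nonpos.mpr hle
    exact le_antisymm h15 hge
  have hPpYPp : Pp * Y * Pp = Hp := by
    have h16 := hX1zero
    rw [hX1eq] at h16
    exact sub_eq_zero.mp h16
  have hZzero : ((1:Mat d) - Pp) * Y * (1 - Pp) = 0 := by
    apply psd_trace_eq_zero hZpsd
    rw [htr2]
    have h17 : trace (Y * Pp) = trace Hp := by rw [← htr1, hPpYPp]
    rw [h17, htrY, sub_self]
  have h7 := psd_corner hYpsd hPpherm hZzero
  rw [h7, hPpYPp]

/-! ### Existence of an invariant positive semidefinite fixed point -/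

lemma exists_invariant_psd {ι : Type*} [Fintype ι] (k : ι → Mat d) (R : Mat d)
    (hR : Rᴴ = R) (hRproj : R * R = R) (hRne : R ≠ 0)
    (hsum : ∑ i, (k i)ᴴ * k i = R) (hkR : ∀ i, k i * R = k i) (hRk : ∀ i, R * k i = k i) :
    ∃ η : Mat d, η.PosSemidef ∧ η ≠ 0 ∧ R * η * R = η ∧ ∑ i, k i * η * (k i)ᴴ = η := by
  classical
  have habsorb : ∀ X : Mat d, X ∈ corner R → R * X = X ∧ X * R = X := by
    intro X hX
    rw [mem_corner] at hX
    constructor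
    · calc R * X = R * (R * X * R) := by rw [hX]
        _ = (R * R) * X * R := by simp only [Matrix.mul_assoc]
        _ = X := by rw [hRproj, hX]
    · calc X * R = (R * X * R) * R := by rw [hX]
        _ = R * X * (R * R) := by simp only [Matrix.mul_assoc]
        _ = X := by rw [hRproj, hX]
  have hEV : ∀ X ∈ corner R, kmap k X ∈ corner R := by
    intro X hX
    rw [mem_corner, kmap_apply]
    rw [Matrix.mul_sum, Matrix.sum_mul]
    refine Finset.sum_congr rfl fun i _ => ?_
    have hkh : (k i)ᴴ * R = (k i)ᴴ := by
      have h9 := congrArg conjTranspose (hRk i)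
      rwa [conjTranspose_mul, hR] at h9
    calc R * (k i * X * (k i)ᴴ) * R = (R * k i) * (X * ((k i)ᴴ * R)) := by
          simp only [Matrix.mul_assoc]
      _ = k i * X * (k i)ᴴ := by rw [hRk i, hkh, Matrix.mul_assoc]
  have htrV : ∀ X : Mat d, X ∈ corner R → trace (kmap k X) = trace X := by
    intro X hX
    rw [kmap_apply, trace_sum]
    calc ∑ i, trace (k i * X * (k i)ᴴ)
        = ∑ i, trace ((k i)ᴴ * k i * X) := by
          refine Finset.sum_congr rfl fun i _ => ?_
          rw [trace_mul_cycle]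
      _ = trace ((∑ i, (k i)ᴴ * k i) * X) := by rw [Matrix.sum_mul, trace_sum]
      _ = trace (R * X) := by rw [hsum]
      _ = trace X := by rw [(habsorb X hX).1]
  have hRV : R ∈ corner R := by rw [mem_corner, hRproj, hRproj]
  have htrR : trace R ≠ 0 := by
    intro h0
    apply hRne
    apply eq_zero_of_trace_cts (M := R)
    rw [hR, hRproj]
    exact h0
  set EV : corner R →ₗ[ℂ] corner R := (kmap k).restrict hEV with hEVdef
  set idV : corner R →ₗ[ℂ] corner R := LinearMap.id with hidV
  have hnotinj : ¬ Function.Injective (EV - idV) := by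
    intro hinj
    obtain ⟨X, hXeq⟩ := (LinearMap.injective_iff_surjective.mp hinj) ⟨R, hRV⟩
    have h1 : trace ((((EV - idV) X : corner R)) : Mat d) = 0 := by
      have h2 : (((EV - idV) X : corner R) : Mat d) = (kmap k (X : Mat d)) - (X : Mat d) := by
        simp [hEVdef, hidV, LinearMap.restrict_apply]
      rw [h2, trace_sub, htrV _ X.2, sub_self]
    rw [hXeq] at h1
    exact htrR h1
  obtain ⟨X₁, X₂, hfeq, hne⟩ := Function.not_injective_iff.mp hnotinj
  have hσfix : kmap k ((X₁ - X₂ : corner R) : Mat d) = ((X₁ - X₂ : corner R) : Mat d) := by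
    have h3 : (EV - idV) (X₁ - X₂) = 0 := by rw [map_sub, hfeq, sub_self]
    have h4 : EV (X₁ - X₂) = X₁ - X₂ := by
      have h5 : EV (X₁ - X₂) - (X₁ - X₂) = 0 := by
        rw [← h3]; simp [LinearMap.sub_apply, hidV]
      exact sub_eq_zero.mp h5
    have h5 := congrArg (Subtype.val) h4
    simpa [hEVdef, hidV, LinearMap.restrict_apply] using h5
  have hσV : ((X₁ - X₂ : corner R) : Mat d) ∈ corner R := (X₁ - X₂).2
  have hσne : ((X₁ - X₂ : corner R) : Mat d) ≠ 0 := by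
    intro h
    exact hne (sub_eq_zero.mp (ZeroMemClass.coe_eq_zero.mp h))
  set σ : Mat d := ((X₁ - X₂ : corner R) : Mat d) with hσ
  -- conjTranspose stability
  have hstarV : ∀ X : Mat d, X ∈ corner R → Xᴴ ∈ corner R := by
    intro X hX
    rw [mem_corner] at hX ⊢
    have h6 : R * Xᴴ * R = (R * X * R)ᴴ := by
      rw [conjTranspose_mul, conjTranspose_mul, hR]
      simp only [Matrix.mul_assoc]
    rw [h6, hX]
  have hstarE : ∀ X : Mat d, kmap k Xᴴ = (kmap k X)ᴴ := by
    intro X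
    rw [kmap_apply, kmap_apply, conjTranspose_sum]
    refine Finset.sum_congr rfl fun i _ => ?_
    rw [conjTranspose_mul, conjTranspose_mul, conjTranspose_conjTranspose]
    simp only [Matrix.mul_assoc]
  -- the "process" of extracting a PSD invariant element from a Hermitian one
  have process : ∀ H : Mat d, H ∈ corner R → kmap k H = H → (h : H.IsHermitian) → H ≠ 0 →
      ∃ η : Mat d, η.PosSemidef ∧ η ≠ 0 ∧ R * η * R = η ∧ ∑ i, k i * η * (k i)ᴴ = η := by
    intro H hHV hHfix hH hHne
    by_cases hp0 : mfun hH (fun x => max x 0) = 0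
    · -- H is negative semidefinite; use -H
      refine ⟨-H, ?_, neg_ne_zero.mpr hHne, ?_, ?_⟩
      · have hev := (mfun_eq_zero_iff hH).mp hp0
        have hneg : (-H) = mfun hH (fun x => 0 - x) := by
          rw [mfun_sub hH, mfun_id, mfun_const]
          norm_num
        rw [hneg]
        apply mfun_psd
        intro i
        have h10 := hev i
        have hx : hH.eigenvalues i ≤ 0 := by
          by_contra hgt
          push_neg at hgt
          rw [max_eq_left hgt.le] at h10
          exact (ne_of_gt hgt) h10
        simp only [zero_sub]
        linarith
      · rw [mem_corner] at hHV
        rw [Matrix.mul_neg, Matrix.neg_mul, hHV]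
      · have h11 : kmap k (-H) = -H := by rw [map_neg, hHfix]
        rw [kmap_apply] at h11
        exact h11
    · -- positive part works
      have hHpPSD : (mfun hH (fun x => max x 0)).PosSemidef :=
        mfun_psd hH (fun i => le_max_right _ _)
      have hHm : (mfun hH (fun x => max x 0) - H).PosSemidef := by
        have h12 : mfun hH (fun x => max x 0) - H = mfun hH (fun x => max x 0 - x) := by
          rw [mfun_sub hH, mfun_id]
        rw [h12]
        apply mfun_psd
        intro i
        simp [sub_nonneg, le_max_left]
      have hHR : H * R = H := (habsorb H hHV).2
      have hH1R : mfun hH (fun x => x) * (1 - R) = 0 := by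
        rw [mfun_id, Matrix.mul_sub, Matrix.mul_one, hHR, sub_self]
      have hHpR' : mfun hH (fun x => max x 0) * (1 - R) = 0 :=
        mfun_ann_left hH hH1R _ (fun i hi => by rw [hi]; simp)
      have hHpR : mfun hH (fun x => max x 0) * R = mfun hH (fun x => max x 0) := by
        rw [Matrix.mul_sub, Matrix.mul_one] at hHpR'
        exact (sub_eq_zero.mp hHpR').symm
      have hRHp : R * mfun hH (fun x => max x 0) = mfun hH (fun x => max x 0) := by
        have h6 := congrArg conjTranspose hHpR
        rwa [conjTranspose_mul, hR, mfun_conjTranspose] at h6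
      have hHpV : mfun hH (fun x => max x 0) ∈ corner R := by
        rw [mem_corner, hRHp, hHpR]
      have hPpherm : (mfun hH (fun x => if 0 < x then (1:ℝ) else 0))ᴴ =
          mfun hH (fun x => if 0 < x then (1:ℝ) else 0) := mfun_conjTranspose hH _
      have hPp2 : mfun hH (fun x => if 0 < x then (1:ℝ) else 0) *
          mfun hH (fun x => if 0 < x then (1:ℝ) else 0) =
          mfun hH (fun x => if 0 < x then (1:ℝ) else 0) := by
        rw [mfun_mul_mfun]
        apply mfun_congr
        intro i
        by_cases h : 0 < hH.eigenvalues i <;> simp [h]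
      have hPpHPp : mfun hH (fun x => if 0 < x then (1:ℝ) else 0) * H *
          mfun hH (fun x => if 0 < x then (1:ℝ) else 0) = mfun hH (fun x => max x 0) := by
        have e1 : mfun hH (fun x => if 0 < x then (1:ℝ) else 0) * mfun hH (fun x => x) *
            mfun hH (fun x => if 0 < x then (1:ℝ) else 0) = mfun hH (fun x => max x 0) := by
          rw [mfun_mul_mfun, mfun_mul_mfun]
          apply mfun_congr
          intro i
          by_cases h : 0 < hH.eigenvalues i
          · simp [h, max_eq_left h.le]
          · push_neg at h
            simp [not_lt.mpr h, max_eq_right h]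
        rw [mfun_id] at e1
        exact e1
      have hYpsd : (kmap k (mfun hH (fun x => max x 0))).PosSemidef := by
        rw [kmap_apply]
        exact psd_sum (fun i => hHpPSD.mul_mul_conjTranspose_same _)
      have hYHpsd : (kmap k (mfun hH (fun x => max x 0)) - H).PosSemidef := by
        have hmap : kmap k (mfun hH (fun x => max x 0)) - H =
            kmap k (mfun hH (fun x => max x 0) - H) := by rw [map_sub, hHfix]
        rw [hmap, kmap_apply]
        exact psd_sum (fun i => hHm.mul_mul_conjTranspose_same _)
      have htrY : trace (kmap k (mfun hH (fun x => max x 0))) =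
          trace (mfun hH (fun x => max x 0)) := htrV _ hHpV
      have hfinal : kmap k (mfun hH (fun x => max x 0)) = mfun hH (fun x => max x 0) :=
        psd_fixed_upgrade hYpsd hYHpsd hPpherm hPp2 hPpHPp htrY
      refine ⟨mfun hH (fun x => max x 0), hHpPSD, hp0, (mem_corner).mp hHpV, ?_⟩
      rw [← kmap_apply]
      exact hfinal
  -- produce a Hermitian invariant element
  by_cases hc : σ + σᴴ = 0
  · have hσh : σᴴ = -σ := by
      have h20 := neg_eq_of_add_eq_zero_right hc
      exact h20.symm
    have hH2 : Complex.I • σ + (Complex.I • σ)ᴴ = (2 * Complex.I) • σ := by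
      rw [conjTranspose_smul, hσh, Complex.star_def, Complex.conj_I, smul_neg, neg_smul, neg_neg,
        two_mul, add_smul]
    refine process (Complex.I • σ + (Complex.I • σ)ᴴ) ?_ ?_ ?_ ?_
    · rw [hH2]
      exact Submodule.smul_mem _ _ hσV
    · rw [hH2, _root_.map_smul, hσfix]
    · show (Complex.I • σ + (Complex.I • σ)ᴴ)ᴴ = Complex.I • σ + (Complex.I • σ)ᴴ
      rw [conjTranspose_add, conjTranspose_conjTranspose, add_comm]
    · rw [hH2]
      intro h0
      apply hσne
      have h21 : (2 * Complex.I) ≠ 0 := by simp [Complex.I_ne_zero]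
      exact (smul_eq_zero.mp h0).resolve_left h21
  · refine process (σ + σᴴ) ?_ ?_ ?_ hc
    · exact Submodule.add_mem _ hσV (hstarV σ hσV)
    · rw [map_add, hσfix, hstarE, hσfix]
    · show (σ + σᴴ)ᴴ = σ + σᴴ
      rw [conjTranspose_add, conjTranspose_conjTranspose, add_comm]


/-! ### Nullity decreases when adding an orthogonal PSD part -/

lemma exists_mulVec_ne_zero {M : Mat d} (hM : M ≠ 0) : ∃ v, M *ᵥ v ≠ 0 := by
  by_contra hno
  push_neg at hno
  apply hM
  ext i j
  have h1 := congrFun (hno (Pi.single j 1)) i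
  rw [Matrix.mulVec_single] at h1
  simpa using h1

lemma nullity_lt {ρ η P : Mat d} (hρ : ρ.PosSemidef) (hη : η.PosSemidef) (hηne : η ≠ 0)
    (hρP : ρ * P = ρ) (hηP : η * P = 0) :
    Module.finrank ℂ (LinearMap.ker (ρ + η).mulVecLin) <
      Module.finrank ℂ (LinearMap.ker ρ.mulVecLin) := by
  have hker : LinearMap.ker (ρ + η).mulVecLin ≤ LinearMap.ker ρ.mulVecLin := by
    intro v hv
    rw [LinearMap.mem_ker, mulVecLin_apply] at hv ⊢
    have h1 : star v ⬝ᵥ (ρ + η) *ᵥ v = 0 := by rw [hv, dotProduct_zero]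
    rw [add_mulVec, dotProduct_add] at h1
    have h2 : (0:ℂ) ≤ star v ⬝ᵥ ρ *ᵥ v := hρ.dotProduct_mulVec_nonneg v
    have h3 : (0:ℂ) ≤ star v ⬝ᵥ η *ᵥ v := hη.dotProduct_mulVec_nonneg v
    have h4 : star v ⬝ᵥ ρ *ᵥ v = 0 := by
      have h5 := eq_neg_of_add_eq_zero_left h1
      have h6 : star v ⬝ᵥ ρ *ᵥ v ≤ 0 := by
        rw [h5]
        exact neg_nonpos.mpr h3
      exact le_antisymm h6 h2
    exact (hρ.dotProduct_mulVec_zero_iff v).mp h4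
  obtain ⟨v, hv⟩ := exists_mulVec_ne_zero hηne
  have hρw : ρ *ᵥ (v - P *ᵥ v) = 0 := by
    rw [Matrix.mulVec_sub, Matrix.mulVec_mulVec, hρP, sub_self]
  have hηw : η *ᵥ (v - P *ᵥ v) = η *ᵥ v := by
    rw [Matrix.mulVec_sub, Matrix.mulVec_mulVec, hηP, Matrix.zero_mulVec, sub_zero]
  have hwker : (v - P *ᵥ v) ∈ LinearMap.ker ρ.mulVecLin := by
    rw [LinearMap.mem_ker, mulVecLin_apply]
    exact hρw
  have hwnker : (v - P *ᵥ v) ∉ LinearMap.ker (ρ + η).mulVecLin := by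
    intro hcon
    rw [LinearMap.mem_ker, mulVecLin_apply, add_mulVec, hρw, zero_add, hηw] at hcon
    exact hv hcon
  have hlt : LinearMap.ker (ρ + η).mulVecLin < LinearMap.ker ρ.mulVecLin :=
    lt_of_le_of_ne hker (fun he => hwnker (he ▸ hwker))
  exact Submodule.finrank_lt_finrank_of_lt hlt


/-! ### More PSD utilities -/

lemma psd_sum_zero {ι : Type*} [Fintype ι] {M : ι → Mat d} (h : ∀ i, (M i).PosSemidef)
    (h0 : ∑ i, M i = 0) (i : ι) : M i = 0 := by
  have htr : ∑ j, trace (M j) = 0 := by rw [← trace_sum, h0, trace_zero]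
  have hz := (Finset.sum_eq_zero_iff_of_nonneg (fun j _ => psd_trace_nonneg (h j))).mp htr i
    (Finset.mem_univ i)
  exact psd_trace_eq_zero (h i) hz

lemma psd_conj_zero {S B : Mat d} (hS : S.PosSemidef) (h : Bᴴ * S * B = 0) : S * B = 0 := by
  have h1 : (hS.sqrt * B)ᴴ * (hS.sqrt * B) = Bᴴ * S * B := by
    rw [conjTranspose_mul, hS.posSemidef_sqrt.isHermitian]
    calc Bᴴ * hS.sqrt * (hS.sqrt * B) = Bᴴ * ((hS.sqrt * hS.sqrt) * B) := by
          simp only [Matrix.mul_assoc]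
      _ = Bᴴ * (S * B) := by rw [hS.sqrt_mul_self]
      _ = Bᴴ * S * B := by rw [Matrix.mul_assoc]
  have h2 : hS.sqrt * B = 0 := conjTranspose_mul_self_eq_zero.mp (by rw [h1, h])
  calc S * B = hS.sqrt * (hS.sqrt * B) := by rw [← Matrix.mul_assoc, hS.sqrt_mul_self]
    _ = 0 := by rw [h2, Matrix.mul_zero]

lemma sandwich_zero {U T D : Mat d} (h : D * (Uᴴ * T * U) * D = 0) :
    (U * D * Uᴴ) * T * (U * D * Uᴴ) = 0 := by
  calc (U * D * Uᴴ) * T * (U * D * Uᴴ)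
      = U * (D * (Uᴴ * T * U) * D) * Uᴴ := by simp only [Matrix.mul_assoc]
    _ = 0 := by rw [h, Matrix.mul_zero, Matrix.zero_mul]

/-! ### The main commutation lemma -/

set_option maxHeartbeats 1600000 in
lemma kraus_commute {ι ΩB : Type*} [Fintype ι] [Fintype ΩB] (hd : 0 < d)
    (k : ι → Mat d) (B : ΩB → Mat d)
    (hk1 : ∑ i, (k i)ᴴ * k i = 1)
    (hB : ∀ y, (B y).PosSemidef)
    (hfix : ∀ y, ∑ i, (k i)ᴴ * B y * k i = B y)
    (hdim : (d - 1) ^ 2 + 1 ≤ Module.finrank ℂ ↥(Submodule.span ℂ (Set.range B))) :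
    ∀ i y, k i * B y = B y * k i := by
  classical
  -- an invariant PSD state exists
  have hone : (1 : Mat d) ≠ 0 := by
    intro h
    have h1 := congrFun (congrFun h ⟨0, hd⟩) ⟨0, hd⟩
    simp [Matrix.one_apply_eq] at h1
  obtain ⟨η₀, hη₀psd, hη₀ne, -, hη₀fix⟩ := exists_invariant_psd k 1 conjTranspose_one
    (Matrix.one_mul 1) hone (by simpa using hk1) (fun i => Matrix.mul_one _) (fun i => Matrix.one_mul _)
  -- pick an invariant PSD matrix with minimal nullity
  obtain ⟨ρ, hρpsd, hρne, hρfix, hρnul⟩ :=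
    Nat.sInf_mem (s := {n | ∃ ρ : Mat d, ρ.PosSemidef ∧ ρ ≠ 0 ∧
      (∑ i, k i * ρ * (k i)ᴴ = ρ) ∧ Module.finrank ℂ (LinearMap.ker ρ.mulVecLin) = n})
      ⟨_, η₀, hη₀psd, hη₀ne, hη₀fix, rfl⟩
  have hmin : ∀ σ' : Mat d, σ'.PosSemidef → σ' ≠ 0 → (∑ i, k i * σ' * (k i)ᴴ = σ') →
      Module.finrank ℂ (LinearMap.ker ρ.mulVecLin) ≤
        Module.finrank ℂ (LinearMap.ker σ'.mulVecLin) := by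
    intro σ' h1 h2 h3
    rw [hρnul]
    exact Nat.sInf_le ⟨σ', h1, h2, h3, rfl⟩
  -- support projection of ρ
  set P : Mat d := mfun hρpsd.1 (fun x => if x = 0 then 0 else 1) with hPdef
  have hPherm : Pᴴ = P := by rw [hPdef]; exact mfun_conjTranspose hρpsd.1 _
  have hP2 : P * P = P := by
    rw [hPdef, mfun_mul_mfun]
    apply mfun_congr
    intro i
    by_cases h : hρpsd.1.eigenvalues i = 0 <;> simp [h]
  have hρP : ρ * P = ρ := by
    have e1 : mfun hρpsd.1 (fun x => x) * mfun hρpsd.1 (fun x => if x = 0 then 0 else 1) =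
        mfun hρpsd.1 (fun x => x) := by
      rw [mfun_mul_mfun]
      apply mfun_congr
      intro i
      by_cases h : hρpsd.1.eigenvalues i = 0 <;> simp [h]
    rw [mfun_id] at e1
    rw [hPdef]
    exact e1
  have hPρ : P * ρ = ρ := by
    have h1 := congrArg conjTranspose hρP
    rwa [conjTranspose_mul, hPherm, hρpsd.1.eq] at h1
  have hsupp : ∀ X : Mat d, X * ρ = 0 → X * P = 0 := by
    intro X hX
    rw [hPdef]
    refine mfun_ann_right hρpsd.1 (g := fun x => x) ?_ _ ?_
    · rw [mfun_id]; exact hX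
    · intro i hi
      rw [if_pos (show hρpsd.1.eigenvalues i = 0 from hi)]
  -- contradiction principle from minimality
  have hcontra : ∀ η : Mat d, η.PosSemidef → η ≠ 0 → (∑ i, k i * η * (k i)ᴴ = η) →
      η * P = 0 → False := by
    intro η h1 h2 h3 h4
    have h5 : (ρ + η).PosSemidef := hρpsd.add h1
    have h6 : ρ + η ≠ 0 := by
      intro h7
      apply hρne
      apply psd_trace_eq_zero hρpsd
      have h8 : trace ρ + trace η = 0 := by rw [← trace_add, h7, trace_zero]
      have h9 := psd_trace_nonneg hρpsd
      have h10 := psd_trace_nonneg h1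
      have h11 : trace ρ ≤ 0 := by
        have := eq_neg_of_add_eq_zero_left h8
        rw [this]
        exact neg_nonpos.mpr h10
      exact le_antisymm h11 h9
    have h8 : ∑ i, k i * (ρ + η) * (k i)ᴴ = ρ + η := by
      have e : ∀ i, k i * (ρ + η) * (k i)ᴴ = k i * ρ * (k i)ᴴ + k i * η * (k i)ᴴ := by
        intro i
        rw [Matrix.mul_add, Matrix.add_mul]
      rw [Finset.sum_congr rfl (fun i _ => e i), Finset.sum_add_distrib, hρfix, h3]
    have h9 := nullity_lt hρpsd h1 h2 hρP h4
    have h10 := hmin (ρ + η) h5 h6 h8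
    omega
  -- hermiticity/sqrt facts for ρ
  have hsq : hρpsd.sqrt * hρpsd.sqrt = ρ := hρpsd.sqrt_mul_self
  have hsqh : (hρpsd.sqrt)ᴴ = hρpsd.sqrt := hρpsd.posSemidef_sqrt.isHermitian
  -- the Kraus operators leave the support invariant
  have hQherm : ((1 : Mat d) - P)ᴴ = 1 - P := by rw [conjTranspose_sub, conjTranspose_one, hPherm]
  have hQρ : ((1 : Mat d) - P) * ρ = 0 := by
    rw [Matrix.sub_mul, Matrix.one_mul, hPρ, sub_self]
  have hkP : ∀ i, ((1 : Mat d) - P) * k i * P = 0 := by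
    have hsum0 : ∑ i, (((1:Mat d) - P) * k i * hρpsd.sqrt) * (((1:Mat d) - P) * k i * hρpsd.sqrt)ᴴ
        = 0 := by
      have e2 : ∀ i, (((1:Mat d) - P) * k i * hρpsd.sqrt) * (((1:Mat d) - P) * k i * hρpsd.sqrt)ᴴ
          = ((1:Mat d) - P) * (k i * ρ * (k i)ᴴ) * ((1:Mat d) - P)ᴴ := by
        intro i
        rw [conjTranspose_mul, conjTranspose_mul, hsqh]
        calc ((1:Mat d) - P) * k i * hρpsd.sqrt * (hρpsd.sqrt * ((k i)ᴴ * ((1:Mat d) - P)ᴴ))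
            = ((1:Mat d) - P) * (k i * ((hρpsd.sqrt * hρpsd.sqrt) * ((k i)ᴴ * ((1:Mat d) - P)ᴴ))) := by
              simp only [Matrix.mul_assoc]
          _ = ((1:Mat d) - P) * (k i * ρ * (k i)ᴴ) * ((1:Mat d) - P)ᴴ := by
              rw [hsq]; simp only [Matrix.mul_assoc]
      rw [Finset.sum_congr rfl (fun i _ => e2 i), ← Matrix.sum_mul, ← Matrix.mul_sum, hρfix,
        hQherm]
      rw [hQρ, Matrix.zero_mul]
    intro i
    have h11 := eq_zero_of_sum_self_mul_conjTranspose hsum0 i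
    have h12 : ((1:Mat d) - P) * k i * ρ = 0 := by
      calc ((1:Mat d) - P) * k i * ρ = (((1:Mat d) - P) * k i * hρpsd.sqrt) * hρpsd.sqrt := by
            rw [Matrix.mul_assoc (((1:Mat d) - P) * k i), hsq, Matrix.mul_assoc]
        _ = 0 := by rw [h11, Matrix.zero_mul]
    exact hsupp _ h12
  -- the Heisenberg map fixes B and the span of B
  have hΦfix : ∀ y, kmap (fun i => (k i)ᴴ) (B y) = B y := by
    intro y
    rw [kmap_apply]
    simp only [conjTranspose_conjTranspose]
    exact hfix y
  have hΦ1 : kmap (fun i => (k i)ᴴ) (1 : Mat d) = 1 := by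
    rw [kmap_apply]
    simp only [Matrix.mul_one, conjTranspose_conjTranspose]
    exact hk1
  have hΦspan : ∀ T ∈ Submodule.span ℂ (Set.range B), kmap (fun i => (k i)ᴴ) T = T := by
    intro T hT
    induction hT using Submodule.span_induction with
    | mem x hx => obtain ⟨y, rfl⟩ := hx; exact hΦfix y
    | zero => exact map_zero _
    | add a b _ _ ha hb => rw [map_add, ha, hb]
    | smul c a _ ha => rw [LinearMap.map_smul, ha]
  -- Step A : commutators vanish on the support
  have hcommP : ∀ y i, (k i * B y - B y * k i) * P = 0 := by
    intro y
    have hBh : (B y)ᴴ = B y := (hB y).1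
    have s1 : ∑ i, B y * ((k i)ᴴ * k i) * B y = B y * B y := by
      rw [← Matrix.sum_mul, ← Matrix.mul_sum, hk1, Matrix.mul_one]
    have s2 : ∑ i, B y * ((k i)ᴴ * B y * k i) = B y * B y := by
      rw [← Matrix.mul_sum, hfix y]
    have s3 : ∑ i, ((k i)ᴴ * B y * k i) * B y = B y * B y := by
      rw [← Matrix.sum_mul, hfix y]
    have s4 : ∑ i, (k i)ᴴ * (B y * B y) * k i = kmap (fun i => (k i)ᴴ) (B y * B y) := by
      rw [kmap_apply]
      simp only [conjTranspose_conjTranspose]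
    have e4 : ∀ i, (k i * B y - B y * k i)ᴴ * (k i * B y - B y * k i) =
        (B y * ((k i)ᴴ * k i) * B y - B y * ((k i)ᴴ * B y * k i))
          - (((k i)ᴴ * B y * k i) * B y - (k i)ᴴ * (B y * B y) * k i) := by
      intro i
      rw [conjTranspose_sub, conjTranspose_mul, conjTranspose_mul, hBh, Matrix.sub_mul,
        Matrix.mul_sub, Matrix.mul_sub]
      simp only [Matrix.mul_assoc]
    have hsum1 : ∑ i, ((k i * B y - B y * k i)ᴴ * (k i * B y - B y * k i)) =
        kmap (fun i => (k i)ᴴ) (B y * B y) - B y * B y := by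
      rw [Finset.sum_congr rfl (fun i _ => e4 i), Finset.sum_sub_distrib, Finset.sum_sub_distrib,
        Finset.sum_sub_distrib, s1, s2, s3, s4]
      abel
    have htrinv : trace (ρ * kmap (fun i => (k i)ᴴ) (B y * B y)) = trace (ρ * (B y * B y)) := by
      rw [kmap_apply]
      simp only [conjTranspose_conjTranspose]
      rw [Matrix.mul_sum, trace_sum]
      calc ∑ i, trace (ρ * ((k i)ᴴ * (B y * B y) * k i))
          = ∑ i, trace ((k i * ρ * (k i)ᴴ) * (B y * B y)) := by
            refine Finset.sum_congr rfl fun i _ => ?_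
            calc trace (ρ * ((k i)ᴴ * (B y * B y) * k i))
                = trace ((ρ * ((k i)ᴴ * (B y * B y))) * k i) := by simp only [Matrix.mul_assoc]
              _ = trace (k i * (ρ * ((k i)ᴴ * (B y * B y)))) := (trace_mul_comm _ _)
              _ = trace ((k i * ρ * (k i)ᴴ) * (B y * B y)) := by simp only [Matrix.mul_assoc]
        _ = trace ((∑ i, k i * ρ * (k i)ᴴ) * (B y * B y)) := by rw [Matrix.sum_mul, trace_sum]
        _ = trace (ρ * (B y * B y)) := by rw [hρfix]
    have htr0 : ∑ i, trace (ρ * ((k i * B y - B y * k i)ᴴ * (k i * B y - B y * k i))) = 0 := by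
      rw [← trace_sum, ← Matrix.mul_sum, hsum1, Matrix.mul_sub, trace_sub, htrinv, sub_self]
    have hterm : ∀ j, trace ((((k j * B y - B y * k j) * hρpsd.sqrt))ᴴ *
        ((k j * B y - B y * k j) * hρpsd.sqrt)) =
        trace (ρ * ((k j * B y - B y * k j)ᴴ * (k j * B y - B y * k j))) := by
      intro j
      rw [conjTranspose_mul, hsqh]
      calc trace (hρpsd.sqrt * (k j * B y - B y * k j)ᴴ * ((k j * B y - B y * k j) * hρpsd.sqrt))
          = trace (((k j * B y - B y * k j)ᴴ * ((k j * B y - B y * k j) * hρpsd.sqrt)) *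
              hρpsd.sqrt) := by
            rw [Matrix.mul_assoc]
            exact trace_mul_comm _ _
        _ = trace ((k j * B y - B y * k j)ᴴ * ((k j * B y - B y * k j) *
              (hρpsd.sqrt * hρpsd.sqrt))) := by simp only [Matrix.mul_assoc]
        _ = trace ((k j * B y - B y * k j)ᴴ * ((k j * B y - B y * k j) * ρ)) := by rw [hsq]
        _ = trace (((k j * B y - B y * k j)ᴴ * (k j * B y - B y * k j)) * ρ) := by
            simp only [Matrix.mul_assoc]
        _ = trace (ρ * ((k j * B y - B y * k j)ᴴ * (k j * B y - B y * k j))) :=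
            trace_mul_comm _ _
    intro i
    have hnn : ∀ j ∈ Finset.univ,
        (0:ℂ) ≤ trace (ρ * ((k j * B y - B y * k j)ᴴ * (k j * B y - B y * k j))) := by
      intro j _
      rw [← hterm j]
      exact trace_cts_nonneg _
    have hz := (Finset.sum_eq_zero_iff_of_nonneg hnn).mp htr0 i (Finset.mem_univ i)
    rw [← hterm i] at hz
    have hCsq : (k i * B y - B y * k i) * hρpsd.sqrt = 0 := eq_zero_of_trace_cts hz
    have hCρ : (k i * B y - B y * k i) * ρ = 0 := by
      calc (k i * B y - B y * k i) * ρ = ((k i * B y - B y * k i) * hρpsd.sqrt) * hρpsd.sqrt := by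
            rw [Matrix.mul_assoc, hsq]
        _ = 0 := by rw [hCsq, Matrix.zero_mul]
    exact hsupp _ hCρ
  have hcommPspan : ∀ T ∈ Submodule.span ℂ (Set.range B), ∀ i, (k i * T - T * k i) * P = 0 := by
    intro T hT
    induction hT using Submodule.span_induction with
    | mem x hx =>
        obtain ⟨y, rfl⟩ := hx
        exact fun i => hcommP y i
    | zero => intro i; simp
    | add a b _ _ ha hb =>
        intro i
        have e : (k i * (a + b) - (a + b) * k i) * P =
            (k i * a - a * k i) * P + (k i * b - b * k i) * P := by
          have e0 : k i * (a + b) - (a + b) * k i =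
              (k i * a - a * k i) + (k i * b - b * k i) := by
            rw [Matrix.mul_add, Matrix.add_mul]
            abel
          rw [e0, Matrix.add_mul]
        rw [e, ha i, hb i, add_zero]
    | smul c a _ ha =>
        intro i
        have e : (k i * (c • a) - (c • a) * k i) * P = c • ((k i * a - a * k i) * P) := by
          rw [mul_smul_comm, smul_mul_assoc, ← smul_sub, smul_mul_assoc]
        rw [e, ha i, smul_zero]
  -- Phase 2 helper: no positive eigenvalue for a fixed point supported away from P
  have nopos : ∀ T : Mat d, kmap (fun i => (k i)ᴴ) T = T → ∀ (hT : T.IsHermitian), T * P = 0 →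
      P * T = 0 → ∀ j, hT.eigenvalues j ≤ 0 := by
    intro T hTfix hT hTP hPT j
    by_contra hpos
    push_neg at hpos
    have hne : (Finset.univ : Finset (Fin d)).Nonempty := ⟨⟨0, hd⟩, Finset.mem_univ _⟩
    set lam := Finset.univ.sup' hne hT.eigenvalues with hlam
    have hlam_ge : ∀ i, hT.eigenvalues i ≤ lam := fun i => Finset.le_sup' _ (Finset.mem_univ i)
    have hlam_pos : 0 < lam := lt_of_lt_of_le hpos (hlam_ge j)
    obtain ⟨jm, -, hjm⟩ := Finset.exists_mem_eq_sup' hne hT.eigenvalues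
    have hSeq : mfun hT (fun x => lam - x) = (lam : ℂ) • 1 - T := by
      rw [mfun_sub hT, mfun_const, mfun_id]
    have hSpsd : (mfun hT (fun x => lam - x)).PosSemidef :=
      mfun_psd hT (fun i => sub_nonneg.mpr (hlam_ge i))
    have hRne : mfun hT (fun x => if x = lam then (1:ℝ) else 0) ≠ 0 := by
      intro h0
      have h1 := (mfun_eq_zero_iff hT).mp h0 jm
      rw [if_pos hjm.symm] at h1
      norm_num at h1
    have hRherm : (mfun hT (fun x => if x = lam then (1:ℝ) else 0))ᴴ =
        mfun hT (fun x => if x = lam then (1:ℝ) else 0) := mfun_conjTranspose hT _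
    have hR2 : mfun hT (fun x => if x = lam then (1:ℝ) else 0) *
        mfun hT (fun x => if x = lam then (1:ℝ) else 0) =
        mfun hT (fun x => if x = lam then (1:ℝ) else 0) := by
      rw [mfun_mul_mfun]
      apply mfun_congr
      intro i
      by_cases h : hT.eigenvalues i = lam <;> simp [h]
    have hPR : P * mfun hT (fun x => if x = lam then (1:ℝ) else 0) = 0 := by
      refine mfun_ann_right hT (g := fun x => x) ?_ _ ?_
      · rw [mfun_id]; exact hPT
      · intro i hi
        have h2 : hT.eigenvalues i = 0 := hi
        rw [h2, if_neg (ne_of_gt hlam_pos).symm]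
    have hRP : mfun hT (fun x => if x = lam then (1:ℝ) else 0) * P = 0 := by
      have h1 := congrArg conjTranspose hPR
      rwa [conjTranspose_mul, hRherm, hPherm, conjTranspose_zero] at h1
    have hΦS : kmap (fun i => (k i)ᴴ) (mfun hT (fun x => lam - x)) =
        mfun hT (fun x => lam - x) := by
      rw [hSeq, map_sub, LinearMap.map_smul, hΦ1, hTfix]
    -- each compressed term vanishes
    have hRSR : ∑ i, (k i * mfun hT (fun x => if x = lam then (1:ℝ) else 0))ᴴ *
        mfun hT (fun x => lam - x) * (k i * mfun hT (fun x => if x = lam then (1:ℝ) else 0)) = 0 := by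
      have hRS : mfun hT (fun x => if x = lam then (1:ℝ) else 0) * mfun hT (fun x => lam - x) = 0 := by
        rw [mfun_mul_mfun]
        apply (mfun_eq_zero_iff hT).mpr
        intro i
        by_cases h : hT.eigenvalues i = lam <;> simp [h]
      have e7 : mfun hT (fun x => if x = lam then (1:ℝ) else 0) *
          kmap (fun i => (k i)ᴴ) (mfun hT (fun x => lam - x)) *
          mfun hT (fun x => if x = lam then (1:ℝ) else 0) = 0 := by
        rw [hΦS, hRS, Matrix.zero_mul]
      rw [kmap_apply, Matrix.mul_sum, Matrix.sum_mul] at e7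
      rw [← e7]
      refine Finset.sum_congr rfl fun i _ => ?_
      rw [conjTranspose_mul, hRherm]
      simp only [conjTranspose_conjTranspose, Matrix.mul_assoc]
    have hSkR : ∀ i, mfun hT (fun x => lam - x) *
        (k i * mfun hT (fun x => if x = lam then (1:ℝ) else 0)) = 0 := by
      intro i
      apply psd_conj_zero hSpsd
      refine psd_sum_zero (fun i' => hSpsd.conjTranspose_mul_mul_same _) hRSR i
    have hRkR : ∀ i, mfun hT (fun x => if x = lam then (1:ℝ) else 0) *
        (k i * mfun hT (fun x => if x = lam then (1:ℝ) else 0)) =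
        k i * mfun hT (fun x => if x = lam then (1:ℝ) else 0) := by
      intro i
      have h1 : mfun hT (fun x => 1 - (if x = lam then (1:ℝ) else 0)) *
          (k i * mfun hT (fun x => if x = lam then (1:ℝ) else 0)) = 0 := by
        refine mfun_ann_left hT (g := fun x => lam - x) (hSkR i) _ ?_
        intro i' hi'
        have h2 : hT.eigenvalues i' = lam := by
          have := sub_eq_zero.mp hi'
          linarith
        rw [if_pos h2]
        norm_num
      rw [mfun_sub hT, mfun_one, Matrix.sub_mul, Matrix.one_mul] at h1
      exact (sub_eq_zero.mp h1).symm
    -- invariant PSD supported under R'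
    have hsum' : ∑ i, (k i * mfun hT (fun x => if x = lam then (1:ℝ) else 0))ᴴ *
        (k i * mfun hT (fun x => if x = lam then (1:ℝ) else 0)) =
        mfun hT (fun x => if x = lam then (1:ℝ) else 0) := by
      have e10 : ∀ i, (k i * mfun hT (fun x => if x = lam then (1:ℝ) else 0))ᴴ *
          (k i * mfun hT (fun x => if x = lam then (1:ℝ) else 0)) =
          mfun hT (fun x => if x = lam then (1:ℝ) else 0) * ((k i)ᴴ * k i) *
          mfun hT (fun x => if x = lam then (1:ℝ) else 0) := by
        intro i
        rw [conjTranspose_mul, hRherm]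
        simp only [Matrix.mul_assoc]
      rw [Finset.sum_congr rfl (fun i _ => e10 i), ← Matrix.sum_mul, ← Matrix.mul_sum, hk1,
        Matrix.mul_one, hR2]
    have hkR' : ∀ i, (k i * mfun hT (fun x => if x = lam then (1:ℝ) else 0)) *
        mfun hT (fun x => if x = lam then (1:ℝ) else 0) =
        k i * mfun hT (fun x => if x = lam then (1:ℝ) else 0) := by
      intro i
      rw [Matrix.mul_assoc, hR2]
    obtain ⟨η, hηpsd, hηne, hηR, hηfix⟩ := exists_invariant_psd
      (fun i => k i * mfun hT (fun x => if x = lam then (1:ℝ) else 0))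
      (mfun hT (fun x => if x = lam then (1:ℝ) else 0)) hRherm hR2 hRne hsum' hkR' hRkR
    have hηfix' : ∑ i, k i * η * (k i)ᴴ = η := by
      have e9 : ∀ i, k i * η * (k i)ᴴ =
          (k i * mfun hT (fun x => if x = lam then (1:ℝ) else 0)) * η *
            ((k i * mfun hT (fun x => if x = lam then (1:ℝ) else 0)))ᴴ := by
        intro i
        conv_lhs => rw [← hηR]
        rw [conjTranspose_mul, hRherm]
        simp only [Matrix.mul_assoc]
      rw [Finset.sum_congr rfl (fun i _ => e9 i)]
      exact hηfix
    have hηP : η * P = 0 := by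
      conv_lhs => rw [← hηR]
      calc mfun hT (fun x => if x = lam then (1:ℝ) else 0) * η *
            mfun hT (fun x => if x = lam then (1:ℝ) else 0) * P
          = mfun hT (fun x => if x = lam then (1:ℝ) else 0) * η *
            (mfun hT (fun x => if x = lam then (1:ℝ) else 0) * P) := by
            simp only [Matrix.mul_assoc]
        _ = 0 := by rw [hRP, Matrix.mul_zero]
    exact hcontra η hηpsd hηne hηfix' hηP
  have phase2 : ∀ T : Mat d, kmap (fun i => (k i)ᴴ) T = T → ∀ (hT : T.IsHermitian), T * P = 0 →
      P * T = 0 → T = 0 := by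
    intro T hTfix hT hTP hPT
    have h1 := nopos T hTfix hT hTP hPT
    have hTneg : (-T).PosSemidef := by
      have e : (-T) = mfun hT (fun x => 0 - x) := by
        rw [mfun_sub hT, mfun_id, mfun_const]
        norm_num
      rw [e]
      refine mfun_psd hT (fun i => ?_)
      have := h1 i
      simp only [zero_sub]
      linarith
    have hTn : (-T).IsHermitian := hT.neg
    have h2 := nopos (-T) (by rw [map_neg, hTfix]) hTn
      (by rw [Matrix.neg_mul, hTP, neg_zero]) (by rw [Matrix.mul_neg, hPT, neg_zero])
    have hTpos : T.PosSemidef := by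
      have e : -(-T) = mfun hTn (fun x => 0 - x) := by
        rw [mfun_sub hTn, mfun_id, mfun_const]
        norm_num
      rw [show T = -(-T) from (neg_neg T).symm, e]
      refine mfun_psd hTn (fun i => ?_)
      have := h2 i
      simp only [zero_sub]
      linarith
    have t1 := psd_trace_nonneg hTpos
    have t2 := psd_trace_nonneg hTneg
    rw [trace_neg] at t2
    exact psd_trace_eq_zero hTpos (le_antisymm (neg_nonneg.mp t2) t1)
  -- Hermitian elements of the span compressed to zero vanish
  have hermcase : ∀ T : Mat d, kmap (fun i => (k i)ᴴ) T = T →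
      (∀ i, (k i * T - T * k i) * P = 0) → ∀ (hTh : Tᴴ = T), P * T * P = 0 → T = 0 := by
    intro T hTfix hTcomm hTh hPTP
    have hrel : ∀ i, k i * T * P = T * k i * P := by
      intro i
      have h3 := hTcomm i
      rw [Matrix.sub_mul] at h3
      exact sub_eq_zero.mp h3
    have hkTρ : ∀ i, k i * (T * ρ) = T * (k i * ρ) := by
      intro i
      have step1 : k i * (T * ρ) = k i * T * P * ρ := by
        rw [Matrix.mul_assoc (k i * T) P ρ, hPρ, Matrix.mul_assoc]
      have step2 : T * (k i * ρ) = T * k i * P * ρ := by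
        rw [Matrix.mul_assoc (T * k i) P ρ, hPρ, Matrix.mul_assoc]
      rw [step1, step2, hrel i]
    have hρTk : ∀ i, ρ * T * (k i)ᴴ = ρ * (k i)ᴴ * T := by
      intro i
      have e := congrArg conjTranspose (hkTρ i)
      rw [conjTranspose_mul, conjTranspose_mul, conjTranspose_mul, conjTranspose_mul, hTh,
        hρpsd.1.eq] at e
      -- e : (T * ρ)ᴴ-ish rearranged; shapes: ((ρᴴ? ... let it be guided
      calc ρ * T * (k i)ᴴ = (ρ * T) * (k i)ᴴ := rfl
        _ = ρ * (k i)ᴴ * T := by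
          have e2 : ρ * T * (k i)ᴴ = (k i * (T * ρ))ᴴ := by
            rw [conjTranspose_mul, conjTranspose_mul, hTh, hρpsd.1.eq]
          have e3 : ρ * (k i)ᴴ * T = (T * (k i * ρ))ᴴ := by
            rw [conjTranspose_mul, conjTranspose_mul, hTh, hρpsd.1.eq]
          rw [e2, e3, hkTρ i]
    have hτfix : ∑ i, k i * (T * ρ * T) * (k i)ᴴ = T * ρ * T := by
      have e5 : ∀ i, k i * (T * ρ * T) * (k i)ᴴ = T * (k i * ρ * (k i)ᴴ) * T := by
        intro i
        calc k i * (T * ρ * T) * (k i)ᴴ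
            = (k i * (T * ρ)) * (T * (k i)ᴴ) := by simp only [Matrix.mul_assoc]
          _ = (T * (k i * ρ)) * (T * (k i)ᴴ) := by rw [hkTρ i]
          _ = T * (k i * (ρ * T * (k i)ᴴ)) := by simp only [Matrix.mul_assoc]
          _ = T * (k i * (ρ * (k i)ᴴ * T)) := by rw [hρTk i]
          _ = T * (k i * ρ * (k i)ᴴ) * T := by simp only [Matrix.mul_assoc]
      rw [Finset.sum_congr rfl (fun i _ => e5 i), ← Matrix.sum_mul, ← Matrix.mul_sum, hρfix]
    have hτpsd : (T * ρ * T).PosSemidef := by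
      have h4 := hρpsd.mul_mul_conjTranspose_same T
      rwa [hTh] at h4
    have hτherm : (T * ρ * T)ᴴ = T * ρ * T := hτpsd.1.eq
    have hPτ : P * (T * ρ * T) = 0 := by
      calc P * (T * ρ * T) = P * T * (P * ρ) * T := by rw [hPρ]; simp only [Matrix.mul_assoc]
        _ = (P * T * P) * ρ * T := by simp only [Matrix.mul_assoc]
        _ = 0 := by rw [hPTP, Matrix.zero_mul, Matrix.zero_mul]
    have hτP : (T * ρ * T) * P = 0 := by
      have h5 := congrArg conjTranspose hPτ
      rwa [conjTranspose_mul, hτherm, hPherm, conjTranspose_zero] at h5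
    have hτ0 : T * ρ * T = 0 := by
      by_contra hτne
      exact hcontra _ hτpsd hτne hτfix hτP
    have hρT : ρ * T = 0 := by
      apply psd_conj_zero hρpsd
      rw [hTh]
      exact hτ0
    have hTP : T * P = 0 := by
      apply hsupp
      have h6 := congrArg conjTranspose hρT
      rwa [conjTranspose_mul, hTh, hρpsd.1.eq, conjTranspose_zero] at h6
    have hPT : P * T = 0 := by
      have h7 := congrArg conjTranspose hTP
      rwa [conjTranspose_mul, hPherm, hTh, conjTranspose_zero] at h7
    exact phase2 T hTfix (hTh : T.IsHermitian) hTP hPT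
  -- case split on whether the support is everything
  by_cases hfull : ∀ i0 : Fin d, hρpsd.1.eigenvalues i0 ≠ 0
  · -- full support: P = 1 and commutators vanish
    have hP1 : P = 1 := by
      rw [hPdef]
      have e : mfun hρpsd.1 (fun x => if x = 0 then 0 else 1) =
          mfun hρpsd.1 (fun _ => 1) := mfun_congr _ (fun i => by rw [if_neg (hfull i)])
      rw [e, mfun_one]
    intro i y
    have h1 := hcommP y i
    rw [hP1, Matrix.mul_one] at h1
    exact sub_eq_zero.mp h1
  · -- non-full support: dimension contradiction
    exfalso
    push_neg at hfull
    obtain ⟨i0, hi0⟩ := hfull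
    -- star-closure of the span
    have hstar_span : ∀ T ∈ Submodule.span ℂ (Set.range B),
        Tᴴ ∈ Submodule.span ℂ (Set.range B) := by
      intro T hT
      rw [Submodule.mem_span_range_iff_exists_fun] at hT ⊢
      obtain ⟨c, hc⟩ := hT
      refine ⟨fun y => star (c y), ?_⟩
      rw [← hc, conjTranspose_sum]
      refine Finset.sum_congr rfl fun y _ => ?_
      rw [conjTranspose_smul, (hB y).1.eq]
    -- injectivity of the compression on the span
    have htinj : ∀ T ∈ Submodule.span ℂ (Set.range B), P * T * P = 0 → T = 0 := by
      intro T hT hPTP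
      have hmain : ∀ W ∈ Submodule.span ℂ (Set.range B), Wᴴ = W → P * W * P = 0 → W = 0 := by
        intro W hW hWh hPWP
        exact hermcase W (hΦspan W hW) (hcommPspan W hW) hWh hPWP
      have hPTHP : P * Tᴴ * P = 0 := by
        have e : P * Tᴴ * P = (P * T * P)ᴴ := by
          rw [conjTranspose_mul, conjTranspose_mul, hPherm]
          simp only [Matrix.mul_assoc]
        rw [e, hPTP, conjTranspose_zero]
      have hT1 : T + Tᴴ = 0 := by
        apply hmain _ (Submodule.add_mem _ hT (hstar_span T hT))
        · rw [conjTranspose_add, conjTranspose_conjTranspose, add_comm]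
        · rw [Matrix.mul_add, Matrix.add_mul, hPTP, hPTHP, add_zero]
      have hT2 : Complex.I • T + (Complex.I • T)ᴴ = 0 := by
        apply hmain _ (Submodule.add_mem _ (Submodule.smul_mem _ _ hT)
          (hstar_span _ (Submodule.smul_mem _ _ hT)))
        · rw [conjTranspose_add, conjTranspose_conjTranspose, add_comm]
        · have e2 : (Complex.I • T)ᴴ = (-Complex.I) • Tᴴ := by
            rw [conjTranspose_smul, Complex.star_def, Complex.conj_I]
          rw [e2, Matrix.mul_add, Matrix.add_mul, mul_smul_comm, smul_mul_assoc,
            mul_smul_comm, smul_mul_assoc, hPTP, hPTHP, smul_zero, smul_zero, add_zero]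
      have h3 : Tᴴ = -T := eq_neg_of_add_eq_zero_right hT1
      have e2 : (Complex.I • T)ᴴ = (-Complex.I) • Tᴴ := by
        rw [conjTranspose_smul, Complex.star_def, Complex.conj_I]
      rw [e2, h3, smul_neg, neg_smul, neg_neg] at hT2
      have h4 : (2 * Complex.I) • T = 0 := by
        rw [two_mul, add_smul]
        exact hT2
      rcases smul_eq_zero.mp h4 with h5 | h5
      · exact absurd h5 (by simp [Complex.I_ne_zero])
      · exact h5
    -- the compression map into the corner matrix block
    have hLinj : ∀ T ∈ Submodule.span ℂ (Set.range B),
        (∀ a b : {i : Fin d // hρpsd.1.eigenvalues i ≠ 0},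
          ((hρpsd.1.eigenvectorUnitary : Mat d)ᴴ * T *
            (hρpsd.1.eigenvectorUnitary : Mat d)) a.1 b.1 = 0) → T = 0 := by
      intro T hT h0
      apply htinj T hT
      rw [hPdef]
      show mfun hρpsd.1 (fun x => if x = 0 then 0 else 1) * T *
          mfun hρpsd.1 (fun x => if x = 0 then 0 else 1) = 0
      unfold mfun
      apply sandwich_zero
      ext a b
      rw [Matrix.mul_diagonal, Matrix.diagonal_mul, Matrix.zero_apply]
      by_cases ha : hρpsd.1.eigenvalues a = 0
      · simp [ha]
      · by_cases hb : hρpsd.1.eigenvalues b = 0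
        · simp [hb]
        · rw [h0 ⟨a, ha⟩ ⟨b, hb⟩]
          simp
    -- build the linear compression map
    let L : Mat d →ₗ[ℂ] Matrix {i : Fin d // hρpsd.1.eigenvalues i ≠ 0}
        {i : Fin d // hρpsd.1.eigenvalues i ≠ 0} ℂ :=
      { toFun := fun X => Matrix.of (fun a b => ((hρpsd.1.eigenvectorUnitary : Mat d)ᴴ * X *
          (hρpsd.1.eigenvectorUnitary : Mat d)) a.1 b.1)
        map_add' := by
          intro X Y
          ext a b
          simp [Matrix.mul_add, Matrix.add_mul]
        map_smul' := by
          intro c X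
          ext a b
          simp [mul_smul_comm, smul_mul_assoc] }
    have hinj : Function.Injective (L.comp (Submodule.span ℂ (Set.range B)).subtype) := by
      rw [← LinearMap.ker_eq_bot]
      apply (Submodule.eq_bot_iff _).mpr
      intro x hx
      rw [LinearMap.mem_ker, LinearMap.comp_apply] at hx
      have h6 : ∀ a b : {i : Fin d // hρpsd.1.eigenvalues i ≠ 0},
          ((hρpsd.1.eigenvectorUnitary : Mat d)ᴴ * (x : Mat d) *
            (hρpsd.1.eigenvectorUnitary : Mat d)) a.1 b.1 = 0 := by
        intro a b
        have := congrFun (congrFun hx a) b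
        simpa [L] using this
      have h7 := hLinj (x : Mat d) x.2 h6
      exact Subtype.ext h7
    have hfinle := LinearMap.finrank_le_finrank_of_injective hinj
    rw [Module.finrank_matrix, Module.finrank_self, mul_one] at hfinle
    have hcard : Fintype.card {i : Fin d // hρpsd.1.eigenvalues i ≠ 0} < d := by
      have h8 := Fintype.card_subtype_lt (p := fun i => hρpsd.1.eigenvalues i ≠ 0) (x := i0)
        (by simpa using hi0)
      simpa using h8
    have h20 : Fintype.card {i : Fin d // hρpsd.1.eigenvalues i ≠ 0} *
        Fintype.card {i : Fin d // hρpsd.1.eigenvalues i ≠ 0} ≤ (d-1)*(d-1) :=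
      Nat.mul_le_mul (by omega) (by omega)
    have h21 : (d-1)^2 = (d-1)*(d-1) := sq (d-1)
    omega

end ND

/-- If the linear span of the effects of `B` has dimension at least `(d-1)² + 1`,
then `A` can be measured without disturbing `B` if and only if `A` and `B` commute. -/
theorem nondisturbance_iff_commute_of_large_span
    {d : ℕ} {ΩA ΩB : Type*} [Fintype ΩA] [Fintype ΩB]
    (A : ΩA → Matrix (Fin d) (Fin d) ℂ) (B : ΩB → Matrix (Fin d) (Fin d) ℂ)
    (hA : ∀ x, (A x).PosSemidef) (hAsum : ∑ x, A x = 1)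
    (hB : ∀ y, (B y).PosSemidef) (hBsum : ∑ y, B y = 1)
    (hdim : (d - 1) ^ 2 + 1 ≤ Module.finrank ℂ ↥(Submodule.span ℂ (Set.range B))) :
    (∃ (n : ℕ) (K : ΩA → Fin n → Matrix (Fin d) (Fin d) ℂ),
        (∀ x, ∑ α, (K x α)ᴴ * K x α = A x) ∧
        (∀ y, ∑ x, ∑ α, (K x α)ᴴ * B y * K x α = B y)) ↔
      ∀ x y, A x * B y = B y * A x := by
  constructor
  · rintro ⟨n, K, hK1, hK2⟩ x y
    rcases Nat.eq_zero_or_pos d with hd0 | hd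
    · subst hd0
      ext i j
      exact i.elim0
    · have hk1 : ∑ p : ΩA × Fin n, ((fun p : ΩA × Fin n => K p.1 p.2) p)ᴴ *
          ((fun p : ΩA × Fin n => K p.1 p.2) p) = 1 := by
        rw [Fintype.sum_prod_type]
        calc ∑ x', ∑ α, (K x' α)ᴴ * K x' α = ∑ x', A x' :=
              Finset.sum_congr rfl fun x' _ => hK1 x'
          _ = 1 := hAsum
      have hfix : ∀ y', ∑ p : ΩA × Fin n, ((fun p : ΩA × Fin n => K p.1 p.2) p)ᴴ * B y' *
          ((fun p : ΩA × Fin n => K p.1 p.2) p) = B y' := by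
        intro y'
        rw [Fintype.sum_prod_type]
        exact hK2 y'
      have hcomm := ND.kraus_commute hd (fun p : ΩA × Fin n => K p.1 p.2) B hk1 hB hfix hdim
      rw [← hK1 x, Matrix.sum_mul, Matrix.mul_sum]
      refine Finset.sum_congr rfl fun α _ => ?_
      have h1 : K x α * B y = B y * K x α := hcomm (x, α) y
      have h2 : (K x α)ᴴ * B y = B y * (K x α)ᴴ := by
        have h3 := congrArg conjTranspose h1
        rw [conjTranspose_mul, conjTranspose_mul, (hB y).1.eq] at h3
        exact h3.symm
      calc (K x α)ᴴ * K x α * B y = (K x α)ᴴ * (B y * K x α) := by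
            rw [Matrix.mul_assoc, h1]
        _ = B y * ((K x α)ᴴ * K x α) := by
            rw [← Matrix.mul_assoc, h2, Matrix.mul_assoc]
  · intro hcomm
    have hsq : ∀ x, ND.mfun (hA x).1 Real.sqrt * ND.mfun (hA x).1 Real.sqrt = A x := by
      intro x
      rw [ND.mfun_mul_mfun]
      have e := ND.mfun_congr (hA x).1
        (f := fun t => Real.sqrt t * Real.sqrt t) (g := fun t => t)
        (fun i => Real.mul_self_sqrt ((hA x).eigenvalues_nonneg i))
      rw [e, ND.mfun_id]
    refine ⟨1, fun x _ => ND.mfun (hA x).1 Real.sqrt, ?_, ?_⟩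
    · intro x
      rw [Fin.sum_univ_one, ND.mfun_conjTranspose]
      exact hsq x
    · intro y
      have hS : ∀ x, B y * ND.mfun (hA x).1 Real.sqrt = ND.mfun (hA x).1 Real.sqrt * B y :=
        fun x => ND.mfun_comm (hA x).1 Real.sqrt (hcomm x y).symm
      have e : ∀ x, ∑ _α : Fin 1, (ND.mfun (hA x).1 Real.sqrt)ᴴ * B y *
          (ND.mfun (hA x).1 Real.sqrt) = B y * A x := by
        intro x
        rw [Fin.sum_univ_one, ND.mfun_conjTranspose]
        calc ND.mfun (hA x).1 Real.sqrt * B y * ND.mfun (hA x).1 Real.sqrt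
            = B y * (ND.mfun (hA x).1 Real.sqrt * ND.mfun (hA x).1 Real.sqrt) := by
              rw [show ND.mfun (hA x).1 Real.sqrt * B y = B y * ND.mfun (hA x).1 Real.sqrt from
                (hS x).symm, Matrix.mul_assoc]
          _ = B y * A x := by rw [hsq x]
      rw [Finset.sum_congr rfl (fun x _ => e x), ← Matrix.mul_sum, hAsum, Matrix.mul_one]
end

section
/- Let A = {A_x}_{x∈Ω_A} and B = {B_y}_{y∈Ω_B} be observables on ℂ². Then the following three conditions are equivalent: (i) there exists an instrument implementing A that does not disturb B; (ii) there exists an instrument implementing B that does not disturb A; (iii) A_x B_y = B_y A_x for all x ∈ Ω_A and y ∈ Ω_B. -/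
open Matrix
open scoped BigOperators ComplexOrder

lemma herm_decomp {B : Matrix (Fin 2) (Fin 2) ℂ} (hB : B.IsHermitian) :
    ∃ V W : Matrix (Fin 2) (Fin 1) ℂ,
      Vᴴ * V = 1 ∧ Vᴴ * W = 0 ∧ Wᴴ * V = 0 ∧ Wᴴ * W = 1 ∧
      V * Vᴴ + W * Wᴴ = 1 ∧
      B = (hB.eigenvalues 0 : ℂ) • (V * Vᴴ) + (hB.eigenvalues 1 : ℂ) • (W * Wᴴ) := by
  set U : Matrix (Fin 2) (Fin 2) ℂ := (hB.eigenvectorUnitary : Matrix (Fin 2) (Fin 2) ℂ) with hU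
  have hUl : Uᴴ * U = 1 := by
    rw [← Matrix.star_eq_conjTranspose]
    exact Matrix.mem_unitaryGroup_iff'.mp (hB.eigenvectorUnitary).2
  have hUr : U * Uᴴ = 1 := by
    rw [← Matrix.star_eq_conjTranspose]
    exact Matrix.mem_unitaryGroup_iff.mp (hB.eigenvectorUnitary).2
  refine ⟨Matrix.of (fun i _ => U i 0), Matrix.of (fun i _ => U i 1), ?_, ?_, ?_, ?_, ?_, ?_⟩
  · ext i j
    have h := congrFun (congrFun hUl 0) 0
    fin_cases i; fin_cases j
    simpa [Matrix.mul_apply, Fin.sum_univ_two, Matrix.conjTranspose_apply,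
      Matrix.one_apply] using h
  · ext i j
    have h := congrFun (congrFun hUl 0) 1
    fin_cases i; fin_cases j
    simpa [Matrix.mul_apply, Fin.sum_univ_two, Matrix.conjTranspose_apply,
      Matrix.one_apply] using h
  · ext i j
    have h := congrFun (congrFun hUl 1) 0
    fin_cases i; fin_cases j
    simpa [Matrix.mul_apply, Fin.sum_univ_two, Matrix.conjTranspose_apply,
      Matrix.one_apply] using h
  · ext i j
    have h := congrFun (congrFun hUl 1) 1
    fin_cases i; fin_cases j
    simpa [Matrix.mul_apply, Fin.sum_univ_two, Matrix.conjTranspose_apply,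
      Matrix.one_apply] using h
  · ext i j
    have h := congrFun (congrFun hUr i) j
    simpa [Matrix.mul_apply, Fin.sum_univ_two, Fin.sum_univ_one,
      Matrix.conjTranspose_apply, Matrix.one_apply] using h
  · have hspec := hB.spectral_theorem
    rw [← Matrix.star_eq_conjTranspose] at *
    ext i j
    have h := congrFun (congrFun hspec i) j
    rw [h]
    simp [Matrix.mul_apply, Fin.sum_univ_two, Fin.sum_univ_one, Matrix.diagonal,
      Matrix.conjTranspose_apply, Matrix.star_apply, RCLike.ofReal_alg, hU, Matrix.IsHermitian.eigenvectorUnitary_apply]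
    ring


lemma key_commute {ι : Type*} [Fintype ι] (M : ι → Matrix (Fin 2) (Fin 2) ℂ)
    (h1 : ∑ i, (M i)ᴴ * M i = 1)
    {B : Matrix (Fin 2) (Fin 2) ℂ} (hB : B.IsHermitian)
    (hfix : ∑ i, (M i)ᴴ * B * M i = B) :
    ∀ i, M i * B = B * M i ∧ (M i)ᴴ * B = B * (M i)ᴴ := by
  obtain ⟨V, W, hV1, hVW, hWV, hW1, hPQ, hBd⟩ := herm_decomp hB
  set e0 : ℂ := (hB.eigenvalues 0 : ℂ)
  set e1 : ℂ := (hB.eigenvalues 1 : ℂ)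
  -- quantified orthonormality rewrites
  have hVV' : ∀ X : Matrix (Fin 1) (Fin 2) ℂ, Vᴴ * (V * X) = X := by
    intro X; rw [← Matrix.mul_assoc, hV1, Matrix.one_mul]
  have hVW' : ∀ X : Matrix (Fin 1) (Fin 2) ℂ, Vᴴ * (W * X) = 0 := by
    intro X; rw [← Matrix.mul_assoc, hVW, Matrix.zero_mul]
  have hWV' : ∀ X : Matrix (Fin 1) (Fin 2) ℂ, Wᴴ * (V * X) = 0 := by
    intro X; rw [← Matrix.mul_assoc, hWV, Matrix.zero_mul]
  have hWW' : ∀ X : Matrix (Fin 1) (Fin 2) ℂ, Wᴴ * (W * X) = X := by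
    intro X; rw [← Matrix.mul_assoc, hW1, Matrix.one_mul]
  intro i
  -- main step: (M i)ᴴ * B = B * (M i)ᴴ
  have hcomm : (M i)ᴴ * B = B * (M i)ᴴ := by
    rcases eq_or_ne e0 e1 with he | hne
    · -- scalar case
      have hBs : B = e0 • (1 : Matrix (Fin 2) (Fin 2) ℂ) := by
        rw [hBd, ← he, ← smul_add, hPQ]
      rw [hBs]
      simp [Matrix.mul_smul, Matrix.smul_mul]
    · -- generic case
      set T : Matrix (Fin 2) (Fin 2) ℂ → Matrix (Fin 2) (Fin 2) ℂ :=
        fun X => ∑ j, (M j)ᴴ * X * M j with hT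
      have Tsmul : ∀ (c : ℂ) X, T (c • X) = c • T X := by
        intro c X
        simp [hT, Finset.smul_sum, mul_smul_comm, smul_mul_assoc]
      have Tsub : ∀ X Y, T (X - Y) = T X - T Y := by
        intro X Y
        simp [hT, mul_sub, sub_mul, Finset.sum_sub_distrib]
      have T1 : T (1 : Matrix (Fin 2) (Fin 2) ℂ) = 1 := by
        simpa [hT] using h1
      have TB : T B = B := hfix
      have hQ : W * Wᴴ = 1 - V * Vᴴ := by rw [← hPQ]; abel
      have hstep : (e0 - e1) • (V * Vᴴ) = B - e1 • (1 : Matrix (Fin 2) (Fin 2) ℂ) := by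
        rw [hBd, ← hPQ]
        module
      have hPP : V * Vᴴ = (e0 - e1)⁻¹ • (B - e1 • (1 : Matrix (Fin 2) (Fin 2) ℂ)) := by
        rw [← hstep, smul_smul, inv_mul_cancel₀ (sub_ne_zero.2 hne), one_smul]
      have hTP : T (V * Vᴴ) = V * Vᴴ := by
        rw [hPP, Tsmul, Tsub, TB, Tsmul, T1]
      have hTQ : T (W * Wᴴ) = W * Wᴴ := by
        rw [hQ, Tsub, T1, hTP]
      -- extract: Wᴴ (M j)ᴴ V = 0 for all j
      have hzero : ∀ (Y Z : Matrix (Fin 2) (Fin 1) ℂ),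
          (Yᴴ * Y = 1) → (Zᴴ * Y = 0) → (∀ X : Matrix (Fin 1) (Fin 2) ℂ, Zᴴ * (Y * X) = 0) →
          T (Y * Yᴴ) = Y * Yᴴ → ∀ j, Zᴴ * (M j)ᴴ * Y = 0 := by
        intro Y Z hY1 hZY hZY' hTY j
        have hsum : ∑ k, (Zᴴ * (M k)ᴴ * Y) * (Zᴴ * (M k)ᴴ * Y)ᴴ = 0 := by
          have h := congrArg (fun X => Zᴴ * X * Z) hTY
          simp only [hT] at h
          rw [Matrix.mul_sum, Matrix.sum_mul] at h
          rw [hZY' Yᴴ, Matrix.zero_mul] at h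
          calc ∑ k, (Zᴴ * (M k)ᴴ * Y) * (Zᴴ * (M k)ᴴ * Y)ᴴ
              = ∑ k, Zᴴ * ((M k)ᴴ * (Y * Yᴴ) * M k) * Z := by
                apply Finset.sum_congr rfl
                intro k _
                simp only [conjTranspose_mul, conjTranspose_conjTranspose, Matrix.mul_assoc]
            _ = 0 := h
        -- entries
        have hent := congrFun (congrFun hsum 0) 0
        simp only [Matrix.sum_apply, Matrix.zero_apply] at hent
        have hent' : ∀ k, ((Zᴴ * (M k)ᴴ * Y) * (Zᴴ * (M k)ᴴ * Y)ᴴ) 0 0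
            = (Complex.normSq ((Zᴴ * (M k)ᴴ * Y) 0 0) : ℂ) := by
          intro k
          rw [Matrix.mul_apply]
          simp [Fin.sum_univ_one, Matrix.conjTranspose_apply, Complex.mul_conj]
        rw [Finset.sum_congr rfl (fun k _ => hent' k)] at hent
        rw [← Complex.ofReal_sum, Complex.ofReal_eq_zero] at hent
        have hz := (Finset.sum_eq_zero_iff_of_nonneg
          (fun k _ => Complex.normSq_nonneg _)).mp hent j (Finset.mem_univ j)
        have hz' : (Zᴴ * (M j)ᴴ * Y) 0 0 = 0 := by
          exact Complex.normSq_eq_zero.mp hz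
        ext a b
        fin_cases a; fin_cases b
        simpa using hz'
      have hN : Wᴴ * (M i)ᴴ * V = 0 := hzero V W hV1 hWV hWV' hTP i
      have hN' : Vᴴ * (M i)ᴴ * W = 0 := hzero W V hW1 hVW hVW' hTQ i
      -- expansion of (M i)ᴴ
      have expand : ∀ X : Matrix (Fin 2) (Fin 2) ℂ,
          X = V * (Vᴴ * X * V) * Vᴴ + V * (Vᴴ * X * W) * Wᴴ
            + W * (Wᴴ * X * V) * Vᴴ + W * (Wᴴ * X * W) * Wᴴ := by
        intro X
        have h1' : (V * Vᴴ + W * Wᴴ) * X * (V * Vᴴ + W * Wᴴ) = X := by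
          rw [hPQ]; simp
        calc X = (V * Vᴴ + W * Wᴴ) * X * (V * Vᴴ + W * Wᴴ) := h1'.symm
          _ = _ := by
            simp only [Matrix.add_mul, Matrix.mul_add, Matrix.mul_assoc]
            abel
      obtain ⟨c, hc⟩ : ∃ c, Vᴴ * (M i)ᴴ * V = c := ⟨_, rfl⟩
      obtain ⟨d, hd⟩ : ∃ d, Wᴴ * (M i)ᴴ * W = d := ⟨_, rfl⟩
      have hMi : (M i)ᴴ = V * c * Vᴴ + W * d * Wᴴ := by
        have h := expand ((M i)ᴴ)
        rw [hN, hN', hc, hd] at h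
        simpa using h
      rw [hBd, hMi]
      simp only [Matrix.mul_add, Matrix.add_mul, mul_smul_comm, smul_mul_assoc,
        Matrix.mul_assoc, hVV', hVW', hWV', hWW', Matrix.mul_zero, Matrix.zero_mul,
        smul_zero, add_zero, zero_add]
  constructor
  · have h := congrArg conjTranspose hcomm
    simp only [conjTranspose_mul, conjTranspose_conjTranspose, hB.eq] at h
    exact h.symm
  · exact hcomm


lemma exists_comm_sqrt {A : Matrix (Fin 2) (Fin 2) ℂ} (hA : A.PosSemidef) :
    ∃ S : Matrix (Fin 2) (Fin 2) ℂ, Sᴴ = S ∧ S * S = A ∧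
      ∀ B, A * B = B * A → S * B = B * S := by
  obtain ⟨V, W, hV1, hVW, hWV, hW1, hPQ, hAd⟩ := herm_decomp hA.1
  set e0 : ℝ := hA.1.eigenvalues 0 with he0def
  set e1 : ℝ := hA.1.eigenvalues 1 with he1def
  have he0 : 0 ≤ e0 := hA.eigenvalues_nonneg 0
  have he1 : 0 ≤ e1 := hA.eigenvalues_nonneg 1
  set s0 : ℂ := (Real.sqrt e0 : ℂ) with hs0def
  set s1 : ℂ := (Real.sqrt e1 : ℂ) with hs1def
  have hVV' : ∀ X : Matrix (Fin 1) (Fin 2) ℂ, Vᴴ * (V * X) = X := by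
    intro X; rw [← Matrix.mul_assoc, hV1, Matrix.one_mul]
  have hVW' : ∀ X : Matrix (Fin 1) (Fin 2) ℂ, Vᴴ * (W * X) = 0 := by
    intro X; rw [← Matrix.mul_assoc, hVW, Matrix.zero_mul]
  have hWV' : ∀ X : Matrix (Fin 1) (Fin 2) ℂ, Wᴴ * (V * X) = 0 := by
    intro X; rw [← Matrix.mul_assoc, hWV, Matrix.zero_mul]
  have hWW' : ∀ X : Matrix (Fin 1) (Fin 2) ℂ, Wᴴ * (W * X) = X := by
    intro X; rw [← Matrix.mul_assoc, hW1, Matrix.one_mul]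
  refine ⟨s0 • (V * Vᴴ) + s1 • (W * Wᴴ), ?_, ?_, ?_⟩
  · simp [conjTranspose_add, conjTranspose_smul, conjTranspose_mul,
      conjTranspose_conjTranspose, hs0def, hs1def, Complex.star_def, Complex.conj_ofReal]
  · have hs0' : s0 * s0 = (e0 : ℂ) := by
      rw [hs0def, ← Complex.ofReal_mul, Real.mul_self_sqrt he0]
    have hs1' : s1 * s1 = (e1 : ℂ) := by
      rw [hs1def, ← Complex.ofReal_mul, Real.mul_self_sqrt he1]
    rw [hAd]
    simp only [Matrix.mul_add, Matrix.add_mul, mul_smul_comm, smul_mul_assoc, smul_smul,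
      Matrix.mul_assoc, hVV', hVW', hWV', hWW', Matrix.mul_zero, Matrix.zero_mul,
      smul_zero, add_zero, zero_add, hs0', hs1']
  · intro B hAB
    rcases eq_or_ne e0 e1 with he | hne
    · have hss : s1 = s0 := by rw [hs0def, hs1def, he]
      have hS : s0 • (V * Vᴴ) + s1 • (W * Wᴴ) = s0 • (1 : Matrix (Fin 2) (Fin 2) ℂ) := by
        rw [hss, ← smul_add, hPQ]
      rw [hS, smul_mul_assoc, mul_smul_comm, Matrix.one_mul, Matrix.mul_one]
    · have hne' : (e0 : ℂ) ≠ (e1 : ℂ) := fun h => hne (Complex.ofReal_inj.mp h)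
      have hstep : ((e0:ℂ) - e1) • (V * Vᴴ) = A - (e1:ℂ) • (1 : Matrix (Fin 2) (Fin 2) ℂ) := by
        rw [hAd, ← hPQ]
        module
      have hP : V * Vᴴ = ((e0:ℂ) - e1)⁻¹ • (A - (e1:ℂ) • (1 : Matrix (Fin 2) (Fin 2) ℂ)) := by
        rw [← hstep, smul_smul, inv_mul_cancel₀ (sub_ne_zero.2 hne'), one_smul]
      have hQ : W * Wᴴ = 1 - V * Vᴴ := by rw [← hPQ]; abel
      have hPB : (V * Vᴴ) * B = B * (V * Vᴴ) := by
        rw [hP]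
        simp only [smul_mul_assoc, mul_smul_comm, Matrix.sub_mul, Matrix.mul_sub,
          Matrix.one_mul, Matrix.mul_one, hAB]
      rw [hQ]
      simp only [Matrix.add_mul, Matrix.mul_add, smul_mul_assoc, mul_smul_comm,
        Matrix.sub_mul, Matrix.mul_sub, Matrix.one_mul, Matrix.mul_one, hPB]


lemma nondist_forward {ΩX ΩY : Type*} [Fintype ΩX] [Fintype ΩY]
    (A : ΩX → Matrix (Fin 2) (Fin 2) ℂ) (B : ΩY → Matrix (Fin 2) (Fin 2) ℂ)
    (hAsum : ∑ x, A x = 1) (hB : ∀ y, (B y).IsHermitian)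
    {n : ℕ} (K : ΩX → Fin n → Matrix (Fin 2) (Fin 2) ℂ)
    (hK : ∀ x, ∑ α, (K x α)ᴴ * K x α = A x)
    (hnd : ∀ y, ∑ x, ∑ α, (K x α)ᴴ * B y * K x α = B y) :
    ∀ x y, A x * B y = B y * A x := by
  intro x y
  have h1 : ∑ p : ΩX × Fin n, (K p.1 p.2)ᴴ * K p.1 p.2 = 1 := by
    rw [Fintype.sum_prod_type]
    calc ∑ x, ∑ α, (K x α)ᴴ * K x α = ∑ x, A x :=
          Finset.sum_congr rfl fun x _ => hK x
      _ = 1 := hAsum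
  have hfix : ∑ p : ΩX × Fin n, (K p.1 p.2)ᴴ * B y * K p.1 p.2 = B y := by
    rw [Fintype.sum_prod_type]
    exact hnd y
  have hcom := key_commute (fun p : ΩX × Fin n => K p.1 p.2) h1 (hB y) hfix
  calc A x * B y = (∑ α, (K x α)ᴴ * K x α) * B y := by rw [hK x]
    _ = ∑ α, (K x α)ᴴ * K x α * B y := by rw [Finset.sum_mul]
    _ = ∑ α, B y * ((K x α)ᴴ * K x α) := by
        refine Finset.sum_congr rfl fun α _ => ?_
        have hc1 := (hcom (x, α)).1
        have hc2 := (hcom (x, α)).2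
        calc (K x α)ᴴ * K x α * B y = (K x α)ᴴ * (K x α * B y) := Matrix.mul_assoc _ _ _
          _ = (K x α)ᴴ * (B y * K x α) := by rw [hc1]
          _ = (K x α)ᴴ * B y * K x α := (Matrix.mul_assoc _ _ _).symm
          _ = B y * (K x α)ᴴ * K x α := by rw [hc2]
          _ = B y * ((K x α)ᴴ * K x α) := Matrix.mul_assoc _ _ _
    _ = B y * ∑ α, (K x α)ᴴ * K x α := by rw [Matrix.mul_sum]
    _ = B y * A x := by rw [hK x]

lemma nondist_backward {ΩX ΩY : Type*} [Fintype ΩX] [Fintype ΩY]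
    (A : ΩX → Matrix (Fin 2) (Fin 2) ℂ) (B : ΩY → Matrix (Fin 2) (Fin 2) ℂ)
    (hA : ∀ x, (A x).PosSemidef) (hAsum : ∑ x, A x = 1)
    (hcomm : ∀ x y, A x * B y = B y * A x) :
    ∃ (n : ℕ) (K : ΩX → Fin n → Matrix (Fin 2) (Fin 2) ℂ),
      (∀ x, ∑ α, (K x α)ᴴ * K x α = A x) ∧
      (∀ y, ∑ x, ∑ α, (K x α)ᴴ * B y * K x α = B y) := by
  choose S hS1 hS2 hS3 using fun x => exists_comm_sqrt (hA x)
  refine ⟨1, fun x _ => S x, ?_, ?_⟩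
  · intro x
    rw [Fin.sum_univ_one, hS1, hS2]
  · intro y
    have hterm : ∀ x, ∑ α : Fin 1, (S x)ᴴ * B y * S x = B y * A x := by
      intro x
      rw [Fin.sum_univ_one]
      calc (S x)ᴴ * B y * S x = S x * B y * S x := by rw [hS1]
        _ = B y * S x * S x := by rw [hS3 x (B y) (hcomm x y)]
        _ = B y * (S x * S x) := Matrix.mul_assoc _ _ _
        _ = B y * A x := by rw [hS2]
    rw [Finset.sum_congr rfl fun x _ => hterm x, ← Matrix.mul_sum, hAsum, Matrix.mul_one]

/-- For qubit observables `A` and `B` (on `ℂ²`), the following are equivalent: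
(i) `A` can be measured without disturbing `B`;
(ii) `B` can be measured without disturbing `A`;
(iii) `A` and `B` commute. -/
theorem qubit_nondisturbance_iff_commute
    {ΩA ΩB : Type*} [Fintype ΩA] [Fintype ΩB]
    (A : ΩA → Matrix (Fin 2) (Fin 2) ℂ) (B : ΩB → Matrix (Fin 2) (Fin 2) ℂ)
    (hA : ∀ x, (A x).PosSemidef) (hAsum : ∑ x, A x = 1)
    (hB : ∀ y, (B y).PosSemidef) (hBsum : ∑ y, B y = 1) :
    ((∃ (n : ℕ) (K : ΩA → Fin n → Matrix (Fin 2) (Fin 2) ℂ),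
        (∀ x, ∑ α, (K x α)ᴴ * K x α = A x) ∧
        (∀ y, ∑ x, ∑ α, (K x α)ᴴ * B y * K x α = B y)) ↔
      ∀ x y, A x * B y = B y * A x) ∧
    ((∃ (n : ℕ) (L : ΩB → Fin n → Matrix (Fin 2) (Fin 2) ℂ),
        (∀ y, ∑ α, (L y α)ᴴ * L y α = B y) ∧
        (∀ x, ∑ y, ∑ α, (L y α)ᴴ * A x * L y α = A x)) ↔
      ∀ x y, A x * B y = B y * A x) := by
  constructor
  · constructor
    · rintro ⟨n, K, hK, hnd⟩
      exact nondist_forward A B hAsum (fun y => (hB y).1) K hK hnd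
    · intro hcomm
      exact nondist_backward A B hA hAsum hcomm
  · constructor
    · rintro ⟨n, L, hL, hnd⟩
      intro x y
      exact (nondist_forward B A hBsum (fun x => (hA x).1) L hL hnd y x).symm
    · intro hcomm
      exact nondist_backward B A hB hBsum (fun y x => (hcomm x y).symm)
end

section
/- Let A = {A_x}_{x∈Ω_A} be an observable on ℂ^d that admits a repeatable instrument. Then the number of outcomes satisfies |Ω_A| ≤ d (here every effect A_x is assumed to be nonzero). -/
open Matrix
open scoped BigOperators ComplexOrder

private lemma sum_mulVec' {ι : Type*} {d : ℕ} (s : Finset ι)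
    (M : ι → Matrix (Fin d) (Fin d) ℂ) (v : Fin d → ℂ) :
    (∑ i ∈ s, M i) *ᵥ v = ∑ i ∈ s, (M i) *ᵥ v := by
  ext j
  simp [Matrix.mulVec, dotProduct, Matrix.sum_apply, Finset.sum_apply, Finset.sum_mul]
  rw [Finset.sum_comm]

private lemma sum_dot' {ι : Type*} {d : ℕ} (s : Finset ι)
    (w : ι → Fin d → ℂ) (v : Fin d → ℂ) :
    v ⬝ᵥ (∑ i ∈ s, w i) = ∑ i ∈ s, v ⬝ᵥ w i := by
  simp [dotProduct, Finset.mul_sum, Finset.sum_apply]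
  rw [Finset.sum_comm]

private lemma psd_sum' {ι : Type*} {d : ℕ} (s : Finset ι)
    (M : ι → Matrix (Fin d) (Fin d) ℂ) (hM : ∀ i ∈ s, (M i).PosSemidef) :
    (∑ i ∈ s, M i).PosSemidef := by
  classical
  induction s using Finset.induction_on with
  | empty => simpa using Matrix.PosSemidef.zero
  | @insert a s ha ih =>
    rw [Finset.sum_insert ha]
    exact ((hM _ (Finset.mem_insert_self _ _))).add
      (ih fun i hi => hM i (Finset.mem_insert_of_mem hi))

private lemma mat_eq_zero_of_mulVec {d : ℕ} {M : Matrix (Fin d) (Fin d) ℂ}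
    (h : ∀ v, M *ᵥ v = 0) : M = 0 := by
  ext a b
  have := congrFun (h (Pi.single b 1)) a
  simpa [Matrix.mulVec_single] using this

/-- A finite sum of PSD matrices equal to zero forces each summand to vanish. -/
private lemma psd_sum_eq_zero {ι : Type*} {d : ℕ} (s : Finset ι)
    (M : ι → Matrix (Fin d) (Fin d) ℂ) (hM : ∀ i ∈ s, (M i).PosSemidef)
    (hsum : ∑ i ∈ s, M i = 0) (i : ι) (hi : i ∈ s) : M i = 0 := by
  apply mat_eq_zero_of_mulVec
  intro v
  have hterm : ∑ j ∈ s, star v ⬝ᵥ (M j) *ᵥ v = 0 := by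
    rw [← sum_dot', ← sum_mulVec', hsum]
    simp
  have hz : ∀ j ∈ s, star v ⬝ᵥ (M j) *ᵥ v = 0 :=
    (Finset.sum_eq_zero_iff_of_nonneg (fun j hj => (hM j hj).dotProduct_mulVec_nonneg v)).mp hterm
  exact ((hM i hi).dotProduct_mulVec_zero_iff v).mp (hz i hi)

/-- If `M` is PSD and `Kᴴ * M * K = 0`, then `M * K = 0`. -/
private lemma psd_conj_zero {d : ℕ} {M K : Matrix (Fin d) (Fin d) ℂ}
    (hM : M.PosSemidef) (h : Kᴴ * M * K = 0) : M * K = 0 := by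
  obtain ⟨B, rfl⟩ : ∃ B : Matrix (Fin d) (Fin d) ℂ, M = Bᴴ * B := by
    open scoped MatrixOrder in
    obtain ⟨B, hB⟩ := CStarAlgebra.nonneg_iff_eq_star_mul_self.mp hM.nonneg
    exact ⟨B, hB⟩
  have hBK : B * K = 0 := by
    have h2 : (B * K)ᴴ * (B * K) = 0 := by
      rw [conjTranspose_mul]
      calc Kᴴ * Bᴴ * (B * K) = Kᴴ * (Bᴴ * B) * K := by
            rw [Matrix.mul_assoc, Matrix.mul_assoc, Matrix.mul_assoc]
        _ = 0 := h
    exact conjTranspose_mul_self_eq_zero.mp h2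
  calc Bᴴ * B * K = Bᴴ * (B * K) := by rw [Matrix.mul_assoc]
    _ = 0 := by rw [hBK, Matrix.mul_zero]

/-- An observable on `ℂ^d` (with nonzero effects) admitting a repeatable instrument
has at most `d` outcomes. -/
theorem repeatable_card_le_dim
    {d : ℕ} {ΩA : Type*} [Fintype ΩA]
    (A : ΩA → Matrix (Fin d) (Fin d) ℂ)
    (hA : ∀ x, (A x).PosSemidef) (hAsum : ∑ x, A x = 1) (hA0 : ∀ x, A x ≠ 0)
    (hrep : ∃ (n : ℕ) (K : ΩA → Fin n → Matrix (Fin d) (Fin d) ℂ),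
      (∀ x, ∑ α, (K x α)ᴴ * K x α = A x) ∧
      (∀ x y, x ≠ y → ∑ α, (K x α)ᴴ * A y * K x α = 0)) :
    Fintype.card ΩA ≤ d := by
  classical
  obtain ⟨n, K, hK, hKrep⟩ := hrep
  have hone : ∀ x : ΩA, (1 - A x) = ∑ y ∈ Finset.univ.erase x, A y := by
    intro x
    rw [Finset.sum_erase_eq_sub (Finset.mem_univ x), hAsum]
  have honePSD : ∀ x : ΩA, (1 - A x : Matrix (Fin d) (Fin d) ℂ).PosSemidef := by
    intro x
    rw [hone]
    exact psd_sum' _ _ (fun y _ => hA y)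
  -- Step 1: A x * K x α = K x α.
  have hfix : ∀ x α, A x * K x α = K x α := by
    intro x α
    have hsum0 : ∑ α, (K x α)ᴴ * (1 - A x) * K x α = 0 := by
      have he : ∀ β : Fin n, (K x β)ᴴ * (1 - A x) * K x β
          = ∑ y ∈ Finset.univ.erase x, (K x β)ᴴ * A y * K x β := by
        intro β
        rw [hone, Finset.mul_sum, Finset.sum_mul]
      simp_rw [he]
      rw [Finset.sum_comm]
      refine Finset.sum_eq_zero fun y hy => ?_
      exact hKrep x y (Finset.ne_of_mem_erase hy).symm
    have hz : (K x α)ᴴ * (1 - A x) * K x α = 0 :=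
      psd_sum_eq_zero Finset.univ _
        (fun β _ => (honePSD x).conjTranspose_mul_mul_same _) hsum0 α (Finset.mem_univ α)
    have h0 := psd_conj_zero (honePSD x) hz
    rw [Matrix.sub_mul, Matrix.one_mul, sub_eq_zero] at h0
    exact h0.symm
  -- Step 2: eigenvectors v x ≠ 0 with A x *ᵥ v x = v x.
  have hv : ∀ x : ΩA, ∃ v : Fin d → ℂ, v ≠ 0 ∧ A x *ᵥ v = v := by
    intro x
    have hα : ∃ α, K x α ≠ 0 := by
      by_contra h
      push_neg at h
      exact hA0 x (by rw [← hK x]; exact Finset.sum_eq_zero fun α _ => by rw [h α]; simp)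
    obtain ⟨α, hα⟩ := hα
    have hw : ∃ w, K x α *ᵥ w ≠ 0 := by
      by_contra h
      push_neg at h
      exact hα (mat_eq_zero_of_mulVec h)
    obtain ⟨w, hw⟩ := hw
    exact ⟨K x α *ᵥ w, hw, by rw [Matrix.mulVec_mulVec, hfix x α]⟩
  choose v hv0 hvfix using hv
  -- Step 3: A x *ᵥ v y = 0 for x ≠ y.
  have hann : ∀ x y : ΩA, x ≠ y → A x *ᵥ v y = 0 := by
    intro x y hxy
    have hsum : ∑ z, star (v y) ⬝ᵥ (A z) *ᵥ v y = star (v y) ⬝ᵥ v y := by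
      rw [← sum_dot', ← sum_mulVec', hAsum, Matrix.one_mulVec]
    have hsplit : ∑ z ∈ Finset.univ.erase y, star (v y) ⬝ᵥ (A z) *ᵥ v y = 0 := by
      rw [Finset.sum_erase_eq_sub (Finset.mem_univ y), hsum, hvfix y, sub_self]
    have hz : star (v y) ⬝ᵥ (A x) *ᵥ v y = 0 := by
      refine (Finset.sum_eq_zero_iff_of_nonneg (fun z _ => (hA z).dotProduct_mulVec_nonneg _)).mp hsplit x ?_
      exact Finset.mem_erase.mpr ⟨hxy, Finset.mem_univ x⟩
    exact ((hA x).dotProduct_mulVec_zero_iff _).mp hz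
  -- Step 4: orthogonality.
  have horth : ∀ x y : ΩA, x ≠ y → star (v x) ⬝ᵥ v y = 0 := by
    intro x y hxy
    have hvm : star (v x) ᵥ* A y = 0 := by
      have h0 : (A y) *ᵥ v x = 0 := hann y x (Ne.symm hxy)
      calc star (v x) ᵥ* A y = star (v x) ᵥ* (A y)ᴴ := by rw [(hA y).1.eq]
        _ = star ((A y) *ᵥ v x) := (Matrix.star_mulVec _ _).symm
        _ = 0 := by rw [h0]; simp
    rw [← hvfix y, Matrix.dotProduct_mulVec, hvm, zero_dotProduct]
  -- Step 5: linear independence and dimension count.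
  have hli : LinearIndependent ℂ v := by
    rw [Fintype.linearIndependent_iff]
    intro g hg i
    have hdot : star (v i) ⬝ᵥ (∑ j, g j • v j) = 0 := by rw [hg, dotProduct_zero]
    rw [sum_dot'] at hdot
    have : ∑ j, g j * (star (v i) ⬝ᵥ v j) = 0 := by
      simpa [dotProduct_smul, smul_eq_mul] using hdot
    rw [Finset.sum_eq_single i (fun j _ hji => by rw [horth i j (Ne.symm hji), mul_zero])
      (fun h => absurd (Finset.mem_univ i) h)] at this
    rcases mul_eq_zero.mp this with h | h
    · exact h
    · exact absurd (dotProduct_star_self_eq_zero.mp h) (hv0 i)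
  have := hli.fintype_card_le_finrank
  rwa [Module.finrank_fin_fun] at this
end

section
/- Let A = {A_x}_{x∈Ω_A} and B = {B_y}_{y∈Ω_B} be observables on ℂ^d, and suppose there is an instrument {I_x} implementing A that does not disturb B. Then A and B are jointly measurable; explicitly, the family G_{x,y} := I_x*(B_y) = Σ_α K_{α,x}* B_y K_{α,x} is an observable on Ω_A × Ω_B (each G_{x,y} is positive semidefinite and Σ_{x,y} G_{x,y} = 1) satisfying Σ_y G_{x,y} = A_x for all x and Σ_x G_{x,y} = B_y for all y. -/
open Matrix
open scoped BigOperators ComplexOrder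

/-- If an instrument implementing `A` does not disturb `B`, then `A` and `B` are jointly
measurable: `G (x, y) := I_x*(B y)` is an observable on the product outcome set whose
marginals are `A` and `B`. -/
theorem nondisturbance_implies_jointly_measurable
    {d : ℕ} {ΩA ΩB : Type*} [Fintype ΩA] [Fintype ΩB] {κ : Type*} [Fintype κ]
    (A : ΩA → Matrix (Fin d) (Fin d) ℂ) (B : ΩB → Matrix (Fin d) (Fin d) ℂ)
    (hA : ∀ x, (A x).PosSemidef) (hAsum : ∑ x, A x = 1)
    (hB : ∀ y, (B y).PosSemidef) (hBsum : ∑ y, B y = 1)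
    (K : ΩA → κ → Matrix (Fin d) (Fin d) ℂ)
    (hK : ∀ x, ∑ α, (K x α)ᴴ * K x α = A x)
    (hnd : ∀ y, ∑ x, ∑ α, (K x α)ᴴ * B y * K x α = B y) :
    (∀ x y, (∑ α, (K x α)ᴴ * B y * K x α).PosSemidef) ∧
    (∑ x, ∑ y, ∑ α, (K x α)ᴴ * B y * K x α = 1) ∧
    (∀ x, ∑ y, ∑ α, (K x α)ᴴ * B y * K x α = A x) ∧
    (∀ y, ∑ x, ∑ α, (K x α)ᴴ * B y * K x α = B y) := by
  have hmargA : ∀ x, ∑ y, ∑ α, (K x α)ᴴ * B y * K x α = A x := by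
    intro x
    rw [Finset.sum_comm]
    calc ∑ α, ∑ y, (K x α)ᴴ * B y * K x α
        = ∑ α, (K x α)ᴴ * (∑ y, B y) * K x α := by
          congr 1; ext α
          simp [Finset.mul_sum, Finset.sum_mul]
      _ = A x := by rw [hBsum]; simp only [mul_one]; exact hK x
  refine ⟨?_, ?_, hmargA, hnd⟩
  · intro x y
    exact Finset.sum_induction (fun α => (K x α)ᴴ * B y * K x α) Matrix.PosSemidef
      (fun a b ha hb => ha.add hb) Matrix.PosSemidef.zero
      (fun α _ => (hB y).conjTranspose_mul_mul_same (K x α))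
  · rw [Finset.sum_congr rfl fun x _ => hmargA x, hAsum]
end

section
/- Let A₁ and B₁ be effects on a complex Hilbert space H (0 ≤ A₁ ≤ 1, 0 ≤ B₁ ≤ 1) and let 1/2 < μ ≤ 2/3. Define G₁₁ = (1−μ)·1, G₁₂ = (2μ−1)A₁, G₂₁ = (2μ−1)B₁, G₂₂ = μ·1 − (2μ−1)(A₁ + B₁). Then all four operators G_{x,y} are positive and Σ_{x,y} G_{x,y} = 1, and the marginals satisfy Σ_y G_{1,y} = μA₁ + (1−μ)(1−A₁) =: A^μ₁, Σ_y G_{2,y} = (1−μ)A₁ + μ(1−A₁) =: A^μ₂, Σ_x G_{x,1} = μB₁ + (1−μ)(1−B₁) =: B^μ₁, Σ_x G_{x,2} = (1−μ)B₁ + μ(1−B₁) =: B^μ₂. Hence the coarse-grained two-outcome observables A^μ = {A^μ₁, A^μ₂} and B^μ = {B^μ₁, B^μ₂} are jointly measurable whenever 1/2 < μ ≤ 2/3. -/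
open scoped BigOperators

open ContinuousLinearMap in
lemma smul_isPositive_of_nonneg {H : Type*} [NormedAddCommGroup H] [InnerProductSpace ℂ H]
    [CompleteSpace H] {c : ℝ} (hc : 0 ≤ c) {T : H →L[ℂ] H} (hT : T.IsPositive) :
    (((c : ℝ) : ℂ) • T).IsPositive := by
  have hsa : IsSelfAdjoint (((c : ℝ) : ℂ) • T) := by
    rw [IsSelfAdjoint, star_smul, Complex.star_def, Complex.conj_ofReal, hT.isSelfAdjoint.star_eq]
  refine ⟨isSelfAdjoint_iff_isSymmetric.mp hsa, fun x => ?_⟩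
  have h2 := hT.2 x
  simp only [reApplyInnerSelf_apply, smul_apply, inner_smul_left, Complex.conj_ofReal] at *
  calc (0:ℝ) ≤ c * RCLike.re (inner ℂ (T x) x : ℂ) := mul_nonneg hc h2
    _ = RCLike.re ((c : ℂ) * (inner ℂ (T x) x : ℂ)) := by
        simp [Complex.mul_re]

/-- For effects `A₁`, `B₁` on a complex Hilbert space and `1/2 < μ ≤ 2/3`, the four
operators `G₁₁ = (1−μ)·1`, `G₁₂ = (2μ−1)A₁`, `G₂₁ = (2μ−1)B₁`,
`G₂₂ = μ·1 − (2μ−1)(A₁+B₁)` are positive, sum to `1`, and have the coarse-grainings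
`A^μ` and `B^μ` as marginals; hence `A^μ` and `B^μ` are jointly measurable. -/
theorem coarse_grainings_jointly_measurable
    {H : Type*} [NormedAddCommGroup H] [InnerProductSpace ℂ H] [CompleteSpace H]
    (A₁ B₁ : H →L[ℂ] H)
    (hApos : A₁.IsPositive) (hAeff : ((1 : H →L[ℂ] H) - A₁).IsPositive)
    (hBpos : B₁.IsPositive) (hBeff : ((1 : H →L[ℂ] H) - B₁).IsPositive)
    (μ : ℝ) (hμ₁ : 1 / 2 < μ) (hμ₂ : μ ≤ 2 / 3)
    (G : Fin 2 → Fin 2 → H →L[ℂ] H)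
    (hG : G = ![![((1 - μ : ℝ) : ℂ) • (1 : H →L[ℂ] H), ((2 * μ - 1 : ℝ) : ℂ) • A₁],
                ![((2 * μ - 1 : ℝ) : ℂ) • B₁,
                  ((μ : ℝ) : ℂ) • (1 : H →L[ℂ] H) - ((2 * μ - 1 : ℝ) : ℂ) • (A₁ + B₁)]])
    (Aμ Bμ : Fin 2 → H →L[ℂ] H)
    (hAμ : Aμ = ![((μ : ℝ) : ℂ) • A₁ + ((1 - μ : ℝ) : ℂ) • ((1 : H →L[ℂ] H) - A₁),
                  ((1 - μ : ℝ) : ℂ) • A₁ + ((μ : ℝ) : ℂ) • ((1 : H →L[ℂ] H) - A₁)])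
    (hBμ : Bμ = ![((μ : ℝ) : ℂ) • B₁ + ((1 - μ : ℝ) : ℂ) • ((1 : H →L[ℂ] H) - B₁),
                  ((1 - μ : ℝ) : ℂ) • B₁ + ((μ : ℝ) : ℂ) • ((1 : H →L[ℂ] H) - B₁)]) :
    (∀ x y, (G x y).IsPositive) ∧
    (∑ x, ∑ y, G x y = 1) ∧
    (∀ x, ∑ y, G x y = Aμ x) ∧
    (∀ y, ∑ x, G x y = Bμ y) := by
  subst hG hAμ hBμ
  have h1μ : (0:ℝ) ≤ 1 - μ := by linarith
  have h2μ : (0:ℝ) ≤ 2 * μ - 1 := by linarith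
  have h3μ : (0:ℝ) ≤ 2 - 3 * μ := by linarith
  have hG22 : ((μ : ℝ) : ℂ) • (1 : H →L[ℂ] H) - ((2 * μ - 1 : ℝ) : ℂ) • (A₁ + B₁)
      = ((2 - 3 * μ : ℝ) : ℂ) • (1 : H →L[ℂ] H)
        + (((2 * μ - 1 : ℝ) : ℂ) • ((1 : H →L[ℂ] H) - A₁)
          + ((2 * μ - 1 : ℝ) : ℂ) • ((1 : H →L[ℂ] H) - B₁)) := by
    push_cast
    module
  refine ⟨?_, ?_, ?_, ?_⟩
  · intro x y
    fin_cases x <;> fin_cases y <;> simp only [Fin.mk_zero, Fin.mk_one, Matrix.cons_val_zero,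
      Matrix.cons_val_one, Matrix.head_cons]
    · exact smul_isPositive_of_nonneg h1μ ContinuousLinearMap.isPositive_one
    · exact smul_isPositive_of_nonneg h2μ hApos
    · exact smul_isPositive_of_nonneg h2μ hBpos
    · rw [hG22]
      exact (smul_isPositive_of_nonneg h3μ ContinuousLinearMap.isPositive_one).add
        ((smul_isPositive_of_nonneg h2μ hAeff).add (smul_isPositive_of_nonneg h2μ hBeff))
  · simp only [Fin.sum_univ_two, Matrix.cons_val_zero, Matrix.cons_val_one, Matrix.head_cons]
    push_cast
    module
  · intro x
    fin_cases x <;>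
      simp only [Fin.sum_univ_two, Fin.mk_zero, Fin.mk_one, Matrix.cons_val_zero,
        Matrix.cons_val_one, Matrix.head_cons] <;>
      push_cast <;> module
  · intro y
    fin_cases y <;>
      simp only [Fin.sum_univ_two, Fin.mk_zero, Fin.mk_one, Matrix.cons_val_zero,
        Matrix.cons_val_one, Matrix.head_cons] <;>
      push_cast <;> module
end

section
/- Let P and Q be orthogonal projections on ℂ^d with PQ ≠ QP, let A = {P, 1−P} and B = {Q, 1−Q} be the corresponding sharp two-outcome observables, and let μ, ν ∈ (1/2, 1]. Then there is no instrument implementing the coarse-graining A^μ whose channel satisfies I_c*(B^ν_y) = B^ν_y for y = 1, 2. That is, A^μ cannot be measured without disturbing B^ν, even though for 1/2 < μ = ν ≤ 2/3 the observables A^μ and B^μ are jointly measurable. -/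
open Matrix
open scoped BigOperators


lemma sum_ctms_eq_zero {ι : Type*} [Fintype ι] {d : ℕ}
    (N : ι → Matrix (Fin d) (Fin d) ℂ)
    (h : ∑ i, (N i)ᴴ * N i = 0) (i : ι) : N i = 0 := by
  ext k l
  have h0 : ∑ m, ∑ k, Complex.normSq (N m k l) = 0 := by
    have hc := congrArg (fun M : Matrix (Fin d) (Fin d) ℂ => M l l) h
    simp only [Matrix.sum_apply, Matrix.zero_apply] at hc
    have hd : ∀ m : ι, ((N m)ᴴ * N m) l l = ∑ k, (Complex.normSq (N m k l) : ℂ) := by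
      intro m
      simp [Matrix.mul_apply, Matrix.conjTranspose_apply, Complex.normSq_eq_conj_mul_self]
    simp only [hd] at hc
    exact_mod_cast hc
  have h1 := (Finset.sum_eq_zero_iff_of_nonneg (fun m _ =>
      Finset.sum_nonneg fun k _ => Complex.normSq_nonneg _)).mp h0
  have h2 := (Finset.sum_eq_zero_iff_of_nonneg fun k _ => Complex.normSq_nonneg _).mp
      (h1 i (Finset.mem_univ i)) k (Finset.mem_univ k)
  simpa using Complex.normSq_eq_zero.mp h2

/-- Let `A = {P, 1−P}` and `B = {Q, 1−Q}` be sharp two-outcome observables on `ℂ^d` built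
from non-commuting orthogonal projections, and let `μ, ν ∈ (1/2, 1]`. Then no instrument
implementing the coarse-graining `A^μ` leaves both effects of `B^ν` fixed: `A^μ` cannot be
measured without disturbing `B^ν`. -/
theorem coarse_grained_measurement_disturbs
    {d : ℕ} (P Q : Matrix (Fin d) (Fin d) ℂ)
    (hPherm : P.IsHermitian) (hPproj : P * P = P)
    (hQherm : Q.IsHermitian) (hQproj : Q * Q = Q)
    (hnc : P * Q ≠ Q * P)
    (μ ν : ℝ) (hμ₁ : 1 / 2 < μ) (hμ₂ : μ ≤ 1) (hν₁ : 1 / 2 < ν) (hν₂ : ν ≤ 1) :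
    ¬ ∃ (n : ℕ) (K : Fin 2 → Fin n → Matrix (Fin d) (Fin d) ℂ),
      (∑ α, (K 0 α)ᴴ * K 0 α = ((μ : ℝ) : ℂ) • P + ((1 - μ : ℝ) : ℂ) • (1 - P)) ∧
      (∑ α, (K 1 α)ᴴ * K 1 α = ((1 - μ : ℝ) : ℂ) • P + ((μ : ℝ) : ℂ) • (1 - P)) ∧
      (∑ x, ∑ α, (K x α)ᴴ * (((ν : ℝ) : ℂ) • Q + ((1 - ν : ℝ) : ℂ) • (1 - Q)) * K x α
        = ((ν : ℝ) : ℂ) • Q + ((1 - ν : ℝ) : ℂ) • (1 - Q)) ∧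
      (∑ x, ∑ α, (K x α)ᴴ * (((1 - ν : ℝ) : ℂ) • Q + ((ν : ℝ) : ℂ) • (1 - Q)) * K x α
        = ((1 - ν : ℝ) : ℂ) • Q + ((ν : ℝ) : ℂ) • (1 - Q)) := by
  rintro ⟨n, K, h1, h2, h3, -⟩
  have hQH : Qᴴ = Q := hQherm
  have h1Q : (1 - Q)ᴴ = 1 - Q := by
    rw [conjTranspose_sub, conjTranspose_one, hQH]
  have hνc : (2 * (ν : ℂ) - 1) ≠ 0 := by
    have h : (2 * ν - 1 : ℝ) ≠ 0 := by linarith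
    exact_mod_cast fun h' => h (by exact_mod_cast h')
  have hμc : (2 * (μ : ℂ) - 1) ≠ 0 := by
    have h : (2 * μ - 1 : ℝ) ≠ 0 := by linarith
    exact_mod_cast fun h' => h (by exact_mod_cast h')
  -- unitality
  have hunit : ∑ x, ∑ α, (K x α)ᴴ * K x α = 1 := by
    rw [Fin.sum_univ_two, h1, h2]
    push_cast
    module
  -- Σ Kᴴ Q K = Q
  have hBrw : ((ν : ℝ) : ℂ) • Q + ((1 - ν : ℝ) : ℂ) • (1 - Q)
      = (2 * (ν : ℂ) - 1) • Q + (1 - (ν : ℂ)) • 1 := by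
    push_cast; module
  rw [hBrw] at h3
  have hterm : ∀ x α, (K x α)ᴴ * ((2 * (ν : ℂ) - 1) • Q + (1 - (ν : ℂ)) • 1) * K x α
      = (2 * (ν : ℂ) - 1) • ((K x α)ᴴ * Q * K x α) + (1 - (ν : ℂ)) • ((K x α)ᴴ * K x α) := by
    intro x α
    simp [mul_add, add_mul, Matrix.mul_smul, Matrix.smul_mul, mul_one]
  simp only [hterm, Finset.sum_add_distrib, ← Finset.smul_sum] at h3
  rw [hunit] at h3
  have hS : ∑ x, ∑ α, (K x α)ᴴ * Q * K x α = Q := by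
    have := add_right_cancel h3
    exact smul_right_injective _ hνc this
  -- the conjugations by Q and 1-Q vanish
  have hQQ : ∀ X : Matrix (Fin d) (Fin d) ℂ, Q * (Q * X) = Q * X := fun X => by
    rw [← mul_assoc, hQproj]
  have h1Q1 : ∀ X : Matrix (Fin d) (Fin d) ℂ, (1 - Q) * ((1 - Q) * X) = (1 - Q) * X := fun X => by
    rw [← mul_assoc]
    congr 1
    simp [mul_sub, sub_mul, hQproj]
  have pull : ∀ (A B : Matrix (Fin d) (Fin d) ℂ) (T : Fin 2 → Fin n → Matrix (Fin d) (Fin d) ℂ),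
      ∑ x, ∑ α, A * T x α * B = A * (∑ x, ∑ α, T x α) * B := by
    intro A B T
    simp only [Finset.mul_sum, Finset.sum_mul]
  have hz1 : ∀ x α, Q * K x α * (1 - Q) = 0 := by
    have hsum : ∑ p : Fin 2 × Fin n, (Q * K p.1 p.2 * (1 - Q))ᴴ * (Q * K p.1 p.2 * (1 - Q)) = 0 := by
      have e1 : ∀ x α, (Q * K x α * (1 - Q))ᴴ * (Q * K x α * (1 - Q))
          = (1 - Q) * ((K x α)ᴴ * Q * K x α) * (1 - Q) := by
        intro x α
        simp only [conjTranspose_mul, hQH, h1Q, mul_assoc, hQQ]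
      rw [Fintype.sum_prod_type]
      simp only [e1]
      rw [pull, hS, sub_mul, one_mul, hQproj, sub_self, zero_mul]
    intro x α
    exact sum_ctms_eq_zero _ hsum (x, α)
  have hz2 : ∀ x α, (1 - Q) * K x α * Q = 0 := by
    have hS' : ∑ x, ∑ α, (K x α)ᴴ * (1 - Q) * K x α = 1 - Q := by
      have : ∀ x α, (K x α)ᴴ * (1 - Q) * K x α
          = (K x α)ᴴ * K x α - (K x α)ᴴ * Q * K x α := by
        intro x α; rw [mul_sub, mul_one, sub_mul]
      simp only [this, Finset.sum_sub_distrib, hunit, hS]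
    have hsum : ∑ p : Fin 2 × Fin n, ((1 - Q) * K p.1 p.2 * Q)ᴴ * ((1 - Q) * K p.1 p.2 * Q) = 0 := by
      have e1 : ∀ x α, ((1 - Q) * K x α * Q)ᴴ * ((1 - Q) * K x α * Q)
          = Q * ((K x α)ᴴ * (1 - Q) * K x α) * Q := by
        intro x α
        simp only [conjTranspose_mul, hQH, h1Q, mul_assoc, h1Q1]
      rw [Fintype.sum_prod_type]
      simp only [e1]
      rw [pull, hS', mul_sub, mul_one, hQproj, sub_self, zero_mul]
    intro x α
    exact sum_ctms_eq_zero _ hsum (x, α)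
  -- each K commutes with Q
  have hcomm : ∀ x α, K x α * Q = Q * K x α := by
    intro x α
    have a1 : Q * K x α * Q = Q * K x α := by
      have := hz1 x α
      rw [mul_sub, mul_one, sub_eq_zero] at this
      exact this.symm
    have a2 : K x α * Q = Q * K x α * Q := by
      have := hz2 x α
      rw [sub_mul, one_mul, sub_mul, sub_eq_zero] at this
      exact this
    rw [a2, a1]
  have hcommH : ∀ x α, (K x α)ᴴ * Q = Q * (K x α)ᴴ := by
    intro x α
    have := congrArg conjTranspose (hcomm x α)
    simpa [conjTranspose_mul, hQH] using this.symm
  -- Q commutes with Σ K₀ᴴ K₀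
  have hQA : Q * (∑ α, (K 0 α)ᴴ * K 0 α) = (∑ α, (K 0 α)ᴴ * K 0 α) * Q := by
    rw [Finset.mul_sum, Finset.sum_mul]
    refine Finset.sum_congr rfl fun α _ => ?_
    rw [← mul_assoc, ← hcommH, mul_assoc, ← hcomm, mul_assoc]
  rw [h1] at hQA
  have hfin : (2 * (μ : ℂ) - 1) • (Q * P) = (2 * (μ : ℂ) - 1) • (P * Q) := by
    push_cast at hQA
    simp only [mul_add, add_mul, Matrix.mul_smul, Matrix.smul_mul, mul_sub, sub_mul,
      mul_one, one_mul] at hQA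
    linear_combination (norm := module) hQA
  exact hnc ((smul_right_injective _ hμc hfin).symm)
end
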